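/- arXiv:0805.4576 — 6 statements merged into one kernel-verified Lean document; each statement's English description precedes it below -/
import Mathlib

section
/- Let X be a locally Noetherian scheme, let x_0, x_1, x_2 be an increasing sequence in X, and let Z be a closed subset of X with x_2 ∉ Z. Then there exists a point x_1' of X lying outside Z such that x_0, x_1', x_2 is an increasing sequence. -/
open AlgebraicGeometry CategoryTheory

/-- A sequence of points `x 0, …, x d` of a topological space is an *increasing
sequence* (of length `d`) if `x i ≠ x (i+1)` and `x i` lies in the closure of
`{x (i+1)}` for all `0 ≤ i < d`. -/
def IsIncreasingSeq {T : Type*} [TopologicalSpace T] {d : ℕ} (x : Fin (d + 1) → T) : Prop :=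
  ∀ i : Fin d, x i.castSucc ≠ x i.succ ∧ x i.castSucc ∈ closure ({x i.succ} : Set T)

/-- `U ∈ D_d(T)`: `U` is an open subset such that every point `z` outside of `U`
admits an increasing sequence `z = x 0, x 1, …, x d` of length `d`
(the standard density structure). -/
def InStdDensity (T : Type*) [TopologicalSpace T] (d : ℕ) (U : Set T) : Prop :=
  IsOpen U ∧ ∀ z ∉ U, ∃ x : Fin (d + 1) → T, x 0 = z ∧ IsIncreasingSeq x

section AuxAlgebra

variable {R : Type*} [CommRing R]

/-- A finite module killed by a maximal ideal is Artinian. -/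
lemma auxArtinianOfTorsionMax {M : Type*} [AddCommGroup M] [Module R M]
    [Module.Finite R M] {m : Ideal R} (hm : m.IsMaximal)
    (htor : ∀ (x : M) (a : R), a ∈ m → a • x = 0) : IsArtinian R M := by
  have hM : Module.IsTorsionBySet R M m := fun x a => htor x a.1 a.2
  letI : Module (R ⧸ m) M := hM.module
  haveI : IsScalarTower R (R ⧸ m) M := hM.isScalarTower
  letI : Field (R ⧸ m) := Ideal.Quotient.field m
  haveI : Module.Finite (R ⧸ m) M := Module.Finite.of_restrictScalars_finite R (R ⧸ m) M
  haveI hart : IsArtinian (R ⧸ m) M := isArtinian_of_fg_of_artinian'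
  let e : Submodule R M ↪o Submodule (R ⧸ m) M :=
    { toFun := fun N =>
        { carrier := N
          add_mem' := fun h h' => N.add_mem h h'
          zero_mem' := N.zero_mem
          smul_mem' := by
            intro c x hx
            obtain ⟨r, rfl⟩ := Ideal.Quotient.mk_surjective c
            have : (Ideal.Quotient.mk m r) • x = r • x := hM.mk_smul r x
            rw [this]
            exact N.smul_mem r hx }
      inj' := by
        intro N N' h
        apply SetLike.coe_injective
        exact congrArg (fun (P : Submodule (R ⧸ m) M) => (P : Set M)) h
      map_rel_iff' := by
        intro N N'
        constructor
        · intro h x hx; exact h hx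
        · intro h x hx; exact h hx }
  rw [isArtinian_iff]
  exact e.wellFounded ((isArtinian_iff _ _).mp hart)

/-- A finite module killed by a power of a maximal ideal over a Noetherian ring is Artinian. -/
lemma auxArtinianOfPow [IsNoetherianRing R] {m : Ideal R} (hm : m.IsMaximal) (k : ℕ) :
    ∀ (M : Type*) [AddCommGroup M] [Module R M] [Module.Finite R M],
      m ^ k • (⊤ : Submodule R M) = ⊥ → IsArtinian R M := by
  induction k with
  | zero =>
    intro M _ _ _ h
    rw [pow_zero, Ideal.one_eq_top, Submodule.top_smul] at h
    haveI : Subsingleton M := by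
      constructor
      intro a b
      have ha : a ∈ (⊥ : Submodule R M) := h ▸ Submodule.mem_top
      have hb : b ∈ (⊥ : Submodule R M) := h ▸ Submodule.mem_top
      rw [Submodule.mem_bot] at ha hb
      rw [ha, hb]
    haveI : Finite M := Finite.of_subsingleton
    exact isArtinian_of_finite
  | succ k ih =>
    intro M _ _ _ h
    haveI : IsNoetherian R M := isNoetherian_of_isNoetherianRing_of_finite R M
    set N : Submodule R M := m ^ k • ⊤ with hNdef
    have hmN : m • N = ⊥ := by
      rw [hNdef, ← Submodule.smul_assoc, Ideal.smul_eq_mul, ← pow_succ']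
      exact h
    haveI : Module.Finite R N := Module.Finite.iff_fg.mpr (IsNoetherian.noetherian N)
    haveI hN : IsArtinian R N := by
      refine auxArtinianOfTorsionMax hm ?_
      intro x a ha
      apply Subtype.ext
      have : a • (x : M) ∈ m • N := Submodule.smul_mem_smul ha x.2
      rw [hmN] at this
      simpa using this
    haveI : Module.Finite R (M ⧸ N) := Module.Finite.quotient R N
    haveI hQ : IsArtinian R (M ⧸ N) := by
      refine ih (M ⧸ N) ?_
      have htop : (⊤ : Submodule R (M ⧸ N)) = Submodule.map N.mkQ ⊤ := by
        rw [Submodule.map_top, Submodule.range_mkQ]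
      rw [htop, ← Submodule.map_smul'', ← hNdef]
      rw [eq_bot_iff]
      rintro y ⟨x, hx, rfl⟩
      simp only [Submodule.mem_bot, Submodule.mkQ_apply, Submodule.Quotient.mk_eq_zero]
      exact hx
    exact isArtinian_of_range_eq_ker N.subtype N.mkQ
      (by rw [Submodule.range_subtype, Submodule.ker_mkQ])

open IsLocalRing in
/-- Krull's Hauptidealsatz, core case: in a Noetherian local domain whose maximal ideal
is minimal over a principal ideal, any strictly smaller prime is zero. -/
lemma auxPITCore {R : Type*} [CommRing R] [IsNoetherianRing R] [IsLocalRing R] [IsDomain R]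
    {x : R} (hmin : maximalIdeal R ∈ (Ideal.span {x}).minimalPrimes)
    {p : Ideal R} (hp : p.IsPrime) (hplt : p < maximalIdeal R) : p = ⊥ := by
  -- every prime containing x equals the maximal ideal
  have honly : ∀ q : Ideal R, q.IsPrime → Ideal.span {x} ≤ q → q = maximalIdeal R := by
    intro q hq hle
    obtain ⟨q₀, hq₀, hq₀q⟩ := Ideal.exists_minimalPrimes_le hle
    have hq₀m : q₀ ≤ maximalIdeal R := le_maximalIdeal hq₀.1.1.ne_top
    have : maximalIdeal R ≤ q₀ := hmin.2 hq₀.1 hq₀m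
    have hq₀eq : q₀ = maximalIdeal R := le_antisymm hq₀m this
    exact le_antisymm (le_maximalIdeal hq.ne_top) (hq₀eq ▸ hq₀q)
  -- (span {x}).radical = maximalIdeal R
  have hrad : (Ideal.span {x}).radical = maximalIdeal R := by
    rw [← Ideal.sInf_minimalPrimes]
    have : (Ideal.span {x}).minimalPrimes = {maximalIdeal R} := by
      ext q
      constructor
      · intro hq; exact honly q hq.1.1 hq.1.2
      · intro hq
        rw [Set.mem_singleton_iff] at hq
        subst hq
        exact hmin
    rw [this, sInf_singleton]
  obtain ⟨k, hk⟩ := Ideal.exists_radical_pow_le_of_fg (Ideal.span {x})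
    (IsNoetherian.noetherian _)
  rw [hrad] at hk
  -- x ∉ p
  have hxp : x ∉ p := by
    intro hxp
    have : p = maximalIdeal R := honly p hp (by rwa [Ideal.span_singleton_le_iff_mem])
    exact hplt.ne this
  have hxm : x ∈ maximalIdeal R := hmin.1.2 (Ideal.mem_span_singleton_self x)
  -- localization at p
  haveI : IsNoetherianRing (Localization.AtPrime p) :=
    IsLocalization.isNoetherianRing p.primeCompl _ inferInstance
  haveI : IsDomain (Localization.AtPrime p) :=
    IsLocalization.isDomain_localization (Ideal.primeCompl_le_nonZeroDivisors p)
  set I : ℕ → Ideal R := fun n =>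
    Ideal.comap (algebraMap R (Localization.AtPrime p))
      ((Ideal.map (algebraMap R (Localization.AtPrime p)) p) ^ n) with hI
  have hIanti : ∀ n, I (n + 1) ≤ I n := fun n =>
    Ideal.comap_mono (Ideal.pow_le_pow_right (Nat.le_succ n))
  -- the Artinian module R ⧸ m^k
  haveI hart : IsArtinian R (R ⧸ (maximalIdeal R ^ k)) := by
    refine auxArtinianOfPow (maximalIdeal.isMaximal R) k _ ?_
    rw [eq_bot_iff]
    refine Submodule.smul_le.mpr ?_
    intro a ha y _
    obtain ⟨b, rfl⟩ := Submodule.mkQ_surjective _ y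
    rw [Submodule.mkQ_apply, ← Submodule.Quotient.mk_smul, Submodule.mem_bot,
      Submodule.Quotient.mk_eq_zero, smul_eq_mul]
    exact Ideal.mul_mem_right b _ ha
  -- the descending chain I n ⊔ span {x} stabilizes
  set g : ℕ → Ideal R := fun n => I n ⊔ Ideal.span {x} with hg
  have hgk : ∀ n, maximalIdeal R ^ k ≤ g n := fun n =>
    le_trans hk (le_sup_right)
  have hganti : ∀ n, g (n + 1) ≤ g n := fun n => sup_le_sup_right (hIanti n) _
  set mk := (maximalIdeal R ^ k : Ideal R) with hmk
  let f : ℕ →o (Submodule R (R ⧸ mk))ᵒᵈ :=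
    ⟨fun n => Submodule.map mk.mkQ (g n), by
      intro a b hab
      have : g b ≤ g a := by
        clear hart
        induction hab with
        | refl => exact le_refl _
        | step _ ih => exact le_trans (hganti _) ih
      exact Submodule.map_mono this⟩
  obtain ⟨n, hn⟩ := IsArtinian.monotone_stabilizes f
  have hgstab : g n = g (n + 1) := by
    have h1 : Submodule.map mk.mkQ (g n) = Submodule.map mk.mkQ (g (n + 1)) :=
      hn (n + 1) (Nat.le_succ n)
    have h2 := congrArg (Submodule.comap mk.mkQ) h1
    rw [Submodule.comap_map_mkQ, Submodule.comap_map_mkQ] at h2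
    rwa [sup_eq_right.mpr (hgk n), sup_eq_right.mpr (hgk (n + 1))] at h2
  -- I n ≤ I (n+1) ⊔ m • I n
  have hkey : I n ≤ I (n + 1) ⊔ (maximalIdeal R) • I n := by
    intro a haIn
    have : a ∈ g (n + 1) := by
      rw [← hgstab]; exact Ideal.mem_sup_left haIn
    rw [hg] at this
    obtain ⟨b, hb, c, hc, rfl⟩ := Submodule.mem_sup.mp this
    obtain ⟨r, rfl⟩ := Ideal.mem_span_singleton'.mp hc
    -- r * x ∈ I n
    have hrx : r * x ∈ I n := by
      have : (b + r * x) - b ∈ I n := Submodule.sub_mem _ haIn (hIanti n hb)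
      simpa using this
    -- x is a unit in the localization, so r ∈ I n
    have hxu : IsUnit (algebraMap R (Localization.AtPrime p) x) :=
      IsLocalization.map_units _ (⟨x, hxp⟩ : p.primeCompl)
    have hr : r ∈ I n := by
      rw [hI] at hrx ⊢
      simp only [Ideal.mem_comap, map_mul] at hrx ⊢
      obtain ⟨u, hu⟩ := hxu
      have : algebraMap R (Localization.AtPrime p) r =
          (algebraMap R (Localization.AtPrime p) r *
            algebraMap R (Localization.AtPrime p) x) * ((u⁻¹ : _ˣ) : _) := by
        rw [← hu, mul_assoc, Units.mul_inv, mul_one]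
      rw [this]
      exact Ideal.mul_mem_right _ _ hrx
    refine Submodule.add_mem_sup hb ?_
    have : x • r ∈ (maximalIdeal R) • I n := Submodule.smul_mem_smul hxm hr
    simpa [smul_eq_mul, mul_comm] using this
  -- Nakayama: I n = I (n+1)
  have hInfg : (I n).FG := IsNoetherian.noetherian _
  have hjac : maximalIdeal R ≤ (⊥ : Ideal R).jacobson :=
    le_of_eq (IsLocalRing.jacobson_eq_maximalIdeal ⊥ bot_ne_top).symm
  have hIeq : I n ≤ I (n + 1) :=
    Submodule.le_of_le_smul_of_le_jacobson_bot hInfg hjac hkey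
  -- transfer to the localization : (map p)^n = (map p)^(n+1)
  have hmapeq : (Ideal.map (algebraMap R (Localization.AtPrime p)) p) ^ n =
      (Ideal.map (algebraMap R (Localization.AtPrime p)) p) ^ (n + 1) := by
    have h1 := IsLocalization.map_comap p.primeCompl (Localization.AtPrime p)
      ((Ideal.map (algebraMap R (Localization.AtPrime p)) p) ^ n)
    have h2 := IsLocalization.map_comap p.primeCompl (Localization.AtPrime p)
      ((Ideal.map (algebraMap R (Localization.AtPrime p)) p) ^ (n + 1))
    rw [← h1, ← h2]
    exact le_antisymm (Ideal.map_mono hIeq) (Ideal.map_mono (hIanti n))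
  -- Nakayama in the localization : (map p)^n = ⊥
  haveI : IsLocalRing (Localization.AtPrime p) := IsLocalization.AtPrime.isLocalRing _ p
  have hmapmax : Ideal.map (algebraMap R (Localization.AtPrime p)) p =
      maximalIdeal (Localization.AtPrime p) := Localization.AtPrime.map_eq_maximalIdeal
  have hbot : (Ideal.map (algebraMap R (Localization.AtPrime p)) p) ^ n = ⊥ := by
    refine Submodule.eq_bot_of_le_smul_of_le_jacobson_bot
      (Ideal.map (algebraMap R (Localization.AtPrime p)) p) _
      (IsNoetherian.noetherian _) ?_ ?_
    · have heq : (Ideal.map (algebraMap R (Localization.AtPrime p)) p) •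
          (Ideal.map (algebraMap R (Localization.AtPrime p)) p) ^ n =
          (Ideal.map (algebraMap R (Localization.AtPrime p)) p) ^ (n + 1) := by
        rw [Ideal.smul_eq_mul, ← pow_succ']
      rw [heq, ← hmapeq]
    · rw [hmapmax]
      exact le_of_eq (IsLocalRing.jacobson_eq_maximalIdeal ⊥ bot_ne_top).symm
  -- conclude p = ⊥
  have hn0 : n ≠ 0 := by
    intro h0
    rw [h0, pow_zero, Ideal.one_eq_top] at hbot
    exact top_ne_bot hbot
  rw [eq_bot_iff]
  intro a ha
  rw [Ideal.mem_bot]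
  have hφa : algebraMap R (Localization.AtPrime p) a ∈
      Ideal.map (algebraMap R (Localization.AtPrime p)) p := Ideal.mem_map_of_mem _ ha
  have hpow : (algebraMap R (Localization.AtPrime p) a) ^ n ∈
      (Ideal.map (algebraMap R (Localization.AtPrime p)) p) ^ n := Ideal.pow_mem_pow hφa n
  rw [hbot, Ideal.mem_bot] at hpow
  have hinj : Function.Injective (algebraMap R (Localization.AtPrime p)) :=
    IsLocalization.injective _ (Ideal.primeCompl_le_nonZeroDivisors p)
  have h3 : algebraMap R (Localization.AtPrime p) (a ^ n) =
      algebraMap R (Localization.AtPrime p) 0 := by rw [map_pow, map_zero, hpow]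
  have : a ^ n = 0 := hinj h3
  exact pow_eq_zero_iff hn0 |>.mp this

/-- Krull's Hauptidealsatz for Noetherian domains: a prime minimal over a principal
ideal has height at most one. -/
lemma auxPITDomain {A : Type*} [CommRing A] [IsNoetherianRing A] [IsDomain A]
    {x : A} {P : Ideal A} (hP : P ∈ (Ideal.span {x}).minimalPrimes)
    {Q : Ideal A} (hQ : Q.IsPrime) (hlt : Q < P) : Q = ⊥ := by
  haveI hPp : P.IsPrime := hP.1.1
  haveI : IsNoetherianRing (Localization.AtPrime P) :=
    IsLocalization.isNoetherianRing P.primeCompl _ inferInstance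
  haveI : IsDomain (Localization.AtPrime P) :=
    IsLocalization.isDomain_localization (Ideal.primeCompl_le_nonZeroDivisors P)
  haveI : IsLocalRing (Localization.AtPrime P) := IsLocalization.AtPrime.isLocalRing _ P
  have hinj : Function.Injective (algebraMap A (Localization.AtPrime P)) :=
    IsLocalization.injective _ (Ideal.primeCompl_le_nonZeroDivisors P)
  have hmax : Ideal.map (algebraMap A (Localization.AtPrime P)) P =
      IsLocalRing.maximalIdeal (Localization.AtPrime P) :=
    Localization.AtPrime.map_eq_maximalIdeal
  -- maximal ideal of the localization is minimal over span {x/1}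
  have hmin : IsLocalRing.maximalIdeal (Localization.AtPrime P) ∈
      (Ideal.span {algebraMap A (Localization.AtPrime P) x}).minimalPrimes := by
    constructor
    · refine ⟨(IsLocalRing.maximalIdeal.isMaximal _).isPrime, ?_⟩
      rw [Ideal.span_singleton_le_iff_mem, ← hmax]
      exact Ideal.mem_map_of_mem _ (hP.1.2 (Ideal.mem_span_singleton_self x))
    · rintro q ⟨hq, hqle⟩ hqm
      have hcomap : (Ideal.comap (algebraMap A (Localization.AtPrime P)) q).IsPrime :=
        hq.comap _
      have hxc : x ∈ Ideal.comap (algebraMap A (Localization.AtPrime P)) q := by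
        rw [Ideal.mem_comap]
        exact hqle (Ideal.mem_span_singleton_self _)
      have hcle : Ideal.comap (algebraMap A (Localization.AtPrime P)) q ≤ P := by
        have h5 := Ideal.comap_mono hqm (f := algebraMap A (Localization.AtPrime P))
        exact h5.trans (IsLocalization.AtPrime.comap_maximalIdeal (Localization.AtPrime P) P).le
      have hPle : P ≤ Ideal.comap (algebraMap A (Localization.AtPrime P)) q :=
        hP.2 ⟨hcomap, by rwa [Ideal.span_singleton_le_iff_mem]⟩ hcle
      have hceq : Ideal.comap (algebraMap A (Localization.AtPrime P)) q = P :=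
        le_antisymm hcle hPle
      refine le_of_eq ?_
      have h6 := IsLocalization.map_comap P.primeCompl (Localization.AtPrime P) q
      rw [← hmax]
      exact (congrArg (Ideal.map (algebraMap A (Localization.AtPrime P))) hceq.symm).trans h6
  -- map Q is prime, strictly below maximal
  have hdisj : Disjoint (P.primeCompl : Set A) (Q : Set A) := by
    rw [Set.disjoint_iff]
    rintro y ⟨hy1, hy2⟩
    exact hy1 (hlt.le hy2)
  haveI hQB : (Ideal.map (algebraMap A (Localization.AtPrime P)) Q).IsPrime :=
    IsLocalization.isPrime_of_isPrime_disjoint P.primeCompl _ Q hQ hdisj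
  have hcomapQ : Ideal.comap (algebraMap A (Localization.AtPrime P))
      (Ideal.map (algebraMap A (Localization.AtPrime P)) Q) = Q :=
    IsLocalization.comap_map_of_isPrime_disjoint P.primeCompl _ hQ hdisj
  have hQlt : Ideal.map (algebraMap A (Localization.AtPrime P)) Q <
      IsLocalRing.maximalIdeal (Localization.AtPrime P) := by
    rw [← hmax]
    refine lt_of_le_of_ne (Ideal.map_mono hlt.le) ?_
    intro heq
    have h2 := Ideal.le_comap_map (f := algebraMap A (Localization.AtPrime P)) (I := P)
    rw [← heq, hcomapQ] at h2
    exact hlt.not_ge h2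
  have hQbot : Ideal.map (algebraMap A (Localization.AtPrime P)) Q = ⊥ :=
    auxPITCore hmin hQB hQlt
  rw [← hcomapQ, hQbot]
  rw [eq_bot_iff]
  intro a ha
  rw [Ideal.mem_comap, Ideal.mem_bot] at ha
  rw [Ideal.mem_bot]
  exact hinj (by rw [ha, map_zero])

/-- In a Noetherian ring, the set of minimal primes over an ideal is finite. -/
lemma auxFiniteMinimalPrimes [IsNoetherianRing R] (I : Ideal R) : I.minimalPrimes.Finite := by
  rw [Ideal.minimalPrimes_eq_comap]
  exact (minimalPrimes.finite_of_isNoetherianRing (R ⧸ I)).image _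

open IsLocalRing in
/-- Main local lemma: in a Noetherian local domain of dimension at least 2, for any
nonzero `α` there is a prime strictly between `⊥` and the maximal ideal avoiding `α`. -/
lemma auxLocalMain {A : Type*} [CommRing A] [IsNoetherianRing A] [IsDomain A] [IsLocalRing A]
    {P₁ : Ideal A} (h₁ : P₁.IsPrime) (hbot : ⊥ < P₁) (hlt : P₁ < maximalIdeal A)
    {α : A} (hα : α ≠ 0) :
    ∃ q : Ideal A, q.IsPrime ∧ ⊥ < q ∧ q < maximalIdeal A ∧ α ∉ q := by
  classical
  by_contra hcon
  push_neg at hcon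
  have hcon' : ∀ q : Ideal A, q.IsPrime → ⊥ < q → q < maximalIdeal A → α ∈ q := fun q h1 h2 h3 =>
    hcon q h1 h2 h3
  -- the finitely many minimal primes over (α)
  have hQfin : (Ideal.span {α}).minimalPrimes.Finite := auxFiniteMinimalPrimes _
  have hQlt : ∀ q ∈ (Ideal.span {α}).minimalPrimes, q < maximalIdeal A := by
    intro q hq
    refine lt_of_le_of_ne (le_maximalIdeal hq.1.1.ne_top) ?_
    intro heq
    subst heq
    exact hbot.ne (auxPITCore hq h₁ hlt).symm
  -- prime avoidance : pick x ∈ maximalIdeal A avoiding ⊥ and all q ∈ Q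
  have hm_ne : maximalIdeal A ≠ ⊥ := fun h => by
    rw [h] at hlt; exact (not_lt_bot (lt_trans hbot hlt)).elim
  set s : Finset (Ideal A) := insert (⊥ : Ideal A) hQfin.toFinset with hs
  have hprime : ∀ q ∈ s, q ≠ (⊥ : Ideal A) → q ≠ (⊥ : Ideal A) → q.IsPrime := by
    intro q hq hq1 _
    rcases Finset.mem_insert.mp hq with h | h
    · exact absurd h hq1
    · rw [Set.Finite.mem_toFinset] at h
      exact h.1.1
  obtain ⟨x, hxm, hxn⟩ : ∃ x ∈ maximalIdeal A, x ∉ (⋃ q ∈ s, (q : Set A)) := by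
    by_contra hsub
    push_neg at hsub
    have hsub' : ((maximalIdeal A : Ideal A) : Set A) ⊆ ⋃ q ∈ (↑s : Set (Ideal A)), ((id q : Ideal A) : Set A) := by
      intro y hy
      simpa using hsub y hy
    obtain ⟨q, hq, hle⟩ :=
      (Ideal.subset_union_prime (s := s) (f := id) (⊥ : Ideal A) (⊥ : Ideal A) hprime).mp hsub'
    rcases Finset.mem_insert.mp hq with h | h
    · subst h
      exact hm_ne (le_bot_iff.mp hle)
    · rw [Set.Finite.mem_toFinset] at h
      exact (hQlt q h).not_ge hle
  simp only [Set.mem_iUnion, SetLike.mem_coe, not_exists] at hxn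
  have hx0 : x ≠ 0 := by
    intro h
    exact hxn ⊥ (Finset.mem_insert_self _ _) (by rw [h]; exact Submodule.zero_mem ⊥)
  have hxQ : ∀ q ∈ (Ideal.span {α}).minimalPrimes, x ∉ q := by
    intro q hq hxq
    exact hxn q (Finset.mem_insert_of_mem (hQfin.mem_toFinset.mpr hq)) hxq
  -- pick a minimal prime q' over (x) below the maximal ideal
  obtain ⟨q', hq'min, hq'le⟩ := Ideal.exists_minimalPrimes_le
    (show Ideal.span {x} ≤ maximalIdeal A by rwa [Ideal.span_singleton_le_iff_mem])
  haveI hq'p : q'.IsPrime := hq'min.1.1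
  have hxq' : x ∈ q' := hq'min.1.2 (Ideal.mem_span_singleton_self x)
  rcases eq_or_lt_of_le hq'le with heq | hq'lt
  · -- q' = maximalIdeal A : contradiction with PIT
    rw [heq] at hq'min
    exact hbot.ne (auxPITCore hq'min h₁ hlt).symm
  · -- q' < maximalIdeal A
    have hq'bot : ⊥ < q' := by
      refine bot_lt_iff_ne_bot.mpr ?_
      intro h
      rw [h] at hxq'
      exact hx0 (Ideal.mem_bot.mp hxq')
    have hαq' : α ∈ q' := hcon' q' hq'p hq'bot hq'lt
    obtain ⟨q'', hq''min, hq''le⟩ := Ideal.exists_minimalPrimes_le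
      (show Ideal.span {α} ≤ q' by rwa [Ideal.span_singleton_le_iff_mem])
    have hq''lt : q'' < q' := lt_of_le_of_ne hq''le (by
      intro h
      exact hxQ q'' hq''min (h ▸ hxq'))
    have hbb := auxPITDomain hq'min hq''min.1.1 hq''lt
    have hαq'' : α ∈ q'' := hq''min.1.2 (Ideal.mem_span_singleton_self α)
    rw [hbb] at hαq''
    exact hα (Ideal.mem_bot.mp hαq'')

/-- Main commutative algebra lemma: between a chain of three primes of a Noetherian
ring, the middle prime can be chosen to avoid any ideal not contained in the smallest
prime. -/
lemma auxExistsPrimeBetween {R : Type*} [CommRing R] [IsNoetherianRing R]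
    {p₂ p₁ p₀ : Ideal R} (h₂ : p₂.IsPrime) (h₁ : p₁.IsPrime) (h₀ : p₀.IsPrime)
    (l₂₁ : p₂ < p₁) (l₁₀ : p₁ < p₀) (I : Ideal R) (hI : ¬ I ≤ p₂) :
    ∃ p' : Ideal R, p'.IsPrime ∧ p₂ < p' ∧ p' < p₀ ∧ ¬ I ≤ p' := by
  by_cases hI₁ : ¬ I ≤ p₁
  · exact ⟨p₁, h₁, l₂₁, l₁₀, hI₁⟩
  push_neg at hI₁
  obtain ⟨a, haI, hap₂⟩ := SetLike.not_le_iff_exists.mp hI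
  have hap₁ : a ∈ p₁ := hI₁ haI
  -- pass to the quotient domain D = R ⧸ p₂
  haveI : IsDomain (R ⧸ p₂) := Ideal.Quotient.isDomain p₂
  have hπsurj : Function.Surjective (Ideal.Quotient.mk p₂) := Ideal.Quotient.mk_surjective
  have hcomap : ∀ p : Ideal R, p₂ ≤ p →
      Ideal.comap (Ideal.Quotient.mk p₂) (Ideal.map (Ideal.Quotient.mk p₂) p) = p := by
    intro p hp
    rw [Ideal.comap_map_of_surjective _ hπsurj]
    rw [← RingHom.ker_eq_comap_bot, Ideal.mk_ker]
    exact sup_eq_left.mpr hp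
  haveI hp₁D : (Ideal.map (Ideal.Quotient.mk p₂) p₁).IsPrime :=
    Ideal.map_isPrime_of_surjective hπsurj
      (by rw [show RingHom.ker (Ideal.Quotient.mk p₂) = p₂ from Ideal.mk_ker]; exact l₂₁.le)
  haveI hp₀D : (Ideal.map (Ideal.Quotient.mk p₂) p₀).IsPrime :=
    Ideal.map_isPrime_of_surjective hπsurj
      (by rw [show RingHom.ker (Ideal.Quotient.mk p₂) = p₂ from Ideal.mk_ker]
          exact (l₂₁.trans l₁₀).le)
  have hmaplt : ∀ p q : Ideal R, p₂ ≤ p → p < q →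
      Ideal.map (Ideal.Quotient.mk p₂) p < Ideal.map (Ideal.Quotient.mk p₂) q := by
    intro p q hp hpq
    refine lt_of_le_of_ne (Ideal.map_mono hpq.le) ?_
    intro heq
    have h6 := congrArg (Ideal.comap (Ideal.Quotient.mk p₂)) heq
    rw [hcomap p hp, hcomap q (hp.trans hpq.le)] at h6
    exact hpq.ne h6
  have l₁₀D : Ideal.map (Ideal.Quotient.mk p₂) p₁ < Ideal.map (Ideal.Quotient.mk p₂) p₀ :=
    hmaplt _ _ l₂₁.le l₁₀
  have lbotD : ⊥ < Ideal.map (Ideal.Quotient.mk p₂) p₁ := by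
    have h7 : Ideal.map (Ideal.Quotient.mk p₂) p₂ < Ideal.map (Ideal.Quotient.mk p₂) p₁ :=
      hmaplt _ _ le_rfl l₂₁
    have h8 : Ideal.map (Ideal.Quotient.mk p₂) p₂ = ⊥ := by
      rw [Ideal.map_eq_bot_iff_le_ker,
        show RingHom.ker (Ideal.Quotient.mk p₂) = p₂ from Ideal.mk_ker]
    rwa [h8] at h7
  -- now localize at the image of p₀
  set P₀ : Ideal (R ⧸ p₂) := Ideal.map (Ideal.Quotient.mk p₂) p₀ with hP₀
  set P₁ : Ideal (R ⧸ p₂) := Ideal.map (Ideal.Quotient.mk p₂) p₁ with hP₁def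
  set A := Localization.AtPrime P₀ with hA
  haveI : IsNoetherianRing A := IsLocalization.isNoetherianRing P₀.primeCompl A inferInstance
  haveI : IsDomain A :=
    IsLocalization.isDomain_localization (Ideal.primeCompl_le_nonZeroDivisors _)
  haveI : IsLocalRing A := IsLocalization.AtPrime.isLocalRing A P₀
  have hinjψ : Function.Injective (algebraMap (R ⧸ p₂) A) :=
    IsLocalization.injective (M := P₀.primeCompl) A (Ideal.primeCompl_le_nonZeroDivisors P₀)
  have hdisj : Disjoint (P₀.primeCompl : Set (R ⧸ p₂)) (P₁ : Set (R ⧸ p₂)) := by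
    rw [Set.disjoint_iff]
    rintro y ⟨hy1, hy2⟩
    exact hy1 (l₁₀D.le hy2)
  haveI hP₁A : (Ideal.map (algebraMap (R ⧸ p₂) A) P₁).IsPrime :=
    IsLocalization.isPrime_of_isPrime_disjoint P₀.primeCompl A _ hp₁D hdisj
  have hcomapP₁ : Ideal.comap (algebraMap (R ⧸ p₂) A) (Ideal.map (algebraMap (R ⧸ p₂) A) P₁) = P₁ :=
    IsLocalization.comap_map_of_isPrime_disjoint P₀.primeCompl A hp₁D hdisj
  have hmaxA : Ideal.map (algebraMap (R ⧸ p₂) A) P₀ = IsLocalRing.maximalIdeal A :=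
    Localization.AtPrime.map_eq_maximalIdeal
  have hcomapmax : Ideal.comap (algebraMap (R ⧸ p₂) A) (IsLocalRing.maximalIdeal A) = P₀ :=
    IsLocalization.AtPrime.comap_maximalIdeal A P₀
  have hP₁lt : Ideal.map (algebraMap (R ⧸ p₂) A) P₁ < IsLocalRing.maximalIdeal A := by
    rw [← hmaxA]
    refine lt_of_le_of_ne (Ideal.map_mono l₁₀D.le) ?_
    intro heq
    have h9 := Ideal.le_comap_map (f := algebraMap (R ⧸ p₂) A) (I := P₀)
    rw [← heq, hcomapP₁] at h9
    exact l₁₀D.not_ge h9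
  have hP₁bot : ⊥ < Ideal.map (algebraMap (R ⧸ p₂) A) P₁ := by
    refine bot_lt_iff_ne_bot.mpr ?_
    intro h
    obtain ⟨b, hb, hb0⟩ := SetLike.exists_of_lt lbotD
    have h10 : algebraMap (R ⧸ p₂) A b ∈ Ideal.map (algebraMap (R ⧸ p₂) A) P₁ :=
      Ideal.mem_map_of_mem _ hb
    rw [h, Ideal.mem_bot] at h10
    have : b = 0 := hinjψ (by rw [h10, map_zero])
    exact hb0 (by rw [this]; exact Submodule.zero_mem ⊥)
  have hα0 : algebraMap (R ⧸ p₂) A (Ideal.Quotient.mk p₂ a) ≠ 0 := by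
    intro h
    have h1 : Ideal.Quotient.mk p₂ a = 0 := hinjψ (by rw [h, map_zero])
    exact hap₂ (Ideal.Quotient.eq_zero_iff_mem.mp h1)
  obtain ⟨q, hqp, hqbot, hqlt, hαq⟩ := auxLocalMain hP₁A hP₁bot hP₁lt hα0
  -- transfer back : first to R ⧸ p₂
  set qD := Ideal.comap (algebraMap (R ⧸ p₂) A) q with hqD
  haveI hqDp : qD.IsPrime := hqp.comap _
  have hmapqD : Ideal.map (algebraMap (R ⧸ p₂) A) qD = q :=
    IsLocalization.map_comap P₀.primeCompl A q
  have hqDlt : qD < P₀ := by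
    refine lt_of_le_of_ne ?_ ?_
    · have h11 := Ideal.comap_mono hqlt.le (f := algebraMap (R ⧸ p₂) A)
      rwa [hcomapmax] at h11
    · intro heq
      have h12 : Ideal.map (algebraMap (R ⧸ p₂) A) qD = IsLocalRing.maximalIdeal A := by
        rw [heq, hmaxA]
      rw [hmapqD] at h12
      exact hqlt.ne h12
  have hqDbot : qD ≠ ⊥ := by
    intro h
    rw [h, Ideal.map_bot] at hmapqD
    exact hqbot.ne hmapqD
  have haqD : Ideal.Quotient.mk p₂ a ∉ qD := by
    intro h
    exact hαq (by rw [hqD, Ideal.mem_comap] at h; exact h)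
  -- finally to R
  refine ⟨Ideal.comap (Ideal.Quotient.mk p₂) qD, Ideal.IsPrime.comap _, ?_, ?_, ?_⟩
  · refine lt_of_le_of_ne ?_ ?_
    · intro y hy
      rw [Ideal.mem_comap]
      rw [Ideal.Quotient.eq_zero_iff_mem.mpr hy]
      exact Submodule.zero_mem qD
    · intro heq
      apply hqDbot
      rw [eq_bot_iff]
      intro y hy
      obtain ⟨z, rfl⟩ := hπsurj y
      have : z ∈ Ideal.comap (Ideal.Quotient.mk p₂) qD := hy
      rw [← heq] at this
      rw [Ideal.mem_bot, Ideal.Quotient.eq_zero_iff_mem]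
      exact this
  · refine lt_of_le_of_ne ?_ ?_
    · have h13 : Ideal.comap (Ideal.Quotient.mk p₂) qD ≤
          Ideal.comap (Ideal.Quotient.mk p₂) P₀ := Ideal.comap_mono hqDlt.le
      rwa [hP₀, hcomap p₀ (l₂₁.trans l₁₀).le] at h13
    · intro heq
      have h14 : Ideal.map (Ideal.Quotient.mk p₂) (Ideal.comap (Ideal.Quotient.mk p₂) qD) = qD :=
        Ideal.map_comap_of_surjective _ hπsurj qD
      rw [heq] at h14
      exact hqDlt.ne h14.symm
  · intro hle
    have : a ∈ Ideal.comap (Ideal.Quotient.mk p₂) qD := hle haI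
    rw [Ideal.mem_comap] at this
    exact haqD this

end AuxAlgebra

theorem stmt_2 (X : Scheme) [IsLocallyNoetherian X] (x₀ x₁ x₂ : X)
    (h₀ : x₀ ≠ x₁) (h₀c : x₀ ∈ closure ({x₁} : Set X))
    (h₁ : x₁ ≠ x₂) (h₁c : x₁ ∈ closure ({x₂} : Set X))
    (Z : Set X) (hZ : IsClosed Z) (hx₂ : x₂ ∉ Z) :
    ∃ x₁' : X, x₁' ∉ Z ∧ x₀ ≠ x₁' ∧ x₀ ∈ closure ({x₁'} : Set X) ∧
      x₁' ≠ x₂ ∧ x₁' ∈ closure ({x₂} : Set X) := by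
  -- choose an affine open neighbourhood of x₀
  obtain ⟨W, ⟨V, hV, rfl⟩, hx₀V, -⟩ :=
    X.isBasis_affineOpens.exists_subset_of_mem_open (Set.mem_univ x₀) isOpen_univ
  have hV' : IsAffineOpen V := hV
  -- x₁ and x₂ also belong to V
  have hx₁V : x₁ ∈ (V : Set X) := by
    obtain ⟨y, hyV, hy1⟩ := mem_closure_iff.mp h₀c _ V.isOpen hx₀V
    rw [Set.mem_singleton_iff] at hy1
    rwa [← hy1]
  have hx₂V : x₂ ∈ (V : Set X) := by
    obtain ⟨y, hyV, hy1⟩ := mem_closure_iff.mp h₁c _ V.isOpen hx₁V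
    rw [Set.mem_singleton_iff] at hy1
    rwa [← hy1]
  -- the coordinate ring is Noetherian
  haveI hNoeth : IsNoetherianRing Γ(X, V) := IsLocallyNoetherian.component_noetherian ⟨V, hV'⟩
  set f := hV'.fromSpec with hf
  have hrange : Set.range f.base = (V : Set X) := hV'.range_fromSpec
  have hemb : Topology.IsOpenEmbedding f.base := f.isOpenEmbedding
  have hcont : Continuous f.base := f.continuous
  have hinj : Function.Injective f.base := hemb.injective
  -- lift the three points
  obtain ⟨pt₀, hpt₀⟩ : ∃ p, f.base p = x₀ := by rw [← Set.mem_range, hrange]; exact hx₀V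
  obtain ⟨pt₁, hpt₁⟩ : ∃ p, f.base p = x₁ := by rw [← Set.mem_range, hrange]; exact hx₁V
  obtain ⟨pt₂, hpt₂⟩ : ∃ p, f.base p = x₂ := by rw [← Set.mem_range, hrange]; exact hx₂V
  -- specialization relations between the lifted points
  have hs₁₀ : pt₁ ⤳ pt₀ := by
    rw [← hemb.isInducing.specializes_iff, hpt₀, hpt₁]
    exact specializes_iff_mem_closure.mpr h₀c
  have hs₂₁ : pt₂ ⤳ pt₁ := by
    rw [← hemb.isInducing.specializes_iff, hpt₁, hpt₂]
    exact specializes_iff_mem_closure.mpr h₁c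
  have hle₁₀ : pt₁.asIdeal ≤ pt₀.asIdeal := (PrimeSpectrum.le_iff_specializes _ _).mpr hs₁₀
  have hle₂₁ : pt₂.asIdeal ≤ pt₁.asIdeal := (PrimeSpectrum.le_iff_specializes _ _).mpr hs₂₁
  have hne₁₀ : pt₁.asIdeal ≠ pt₀.asIdeal := by
    intro h
    exact h₀ (show x₀ = x₁ by rw [← hpt₀, ← hpt₁, PrimeSpectrum.ext h])
  have hne₂₁ : pt₂.asIdeal ≠ pt₁.asIdeal := by
    intro h
    exact h₁ (show x₁ = x₂ by rw [← hpt₁, ← hpt₂, PrimeSpectrum.ext h])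
  -- the closed set Z pulled back
  have hZ' : IsClosed (f.base ⁻¹' Z) := hZ.preimage hcont
  obtain ⟨J, hJ⟩ := (PrimeSpectrum.isClosed_iff_zeroLocus_ideal _).mp hZ'
  have hpt₂Z : pt₂ ∉ f.base ⁻¹' Z := by
    intro h
    rw [Set.mem_preimage, hpt₂] at h
    exact hx₂ h
  have hJpt₂ : ¬ (J ≤ pt₂.asIdeal) := by
    intro h
    exact hpt₂Z (by rw [hJ]; exact (PrimeSpectrum.mem_zeroLocus _ _).mpr h)
  -- apply the main commutative algebra lemma
  obtain ⟨p', hp'prime, hlt₂, hlt₀, hJp'⟩ := auxExistsPrimeBetween pt₂.isPrime pt₁.isPrime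
    pt₀.isPrime (lt_of_le_of_ne hle₂₁ hne₂₁) (lt_of_le_of_ne hle₁₀ hne₁₀) J hJpt₂
  set pt' : PrimeSpectrum Γ(X, V) := ⟨p', hp'prime⟩ with hpt'
  refine ⟨f.base pt', ?_, ?_, ?_, ?_, ?_⟩
  · -- not in Z
    intro h
    have : pt' ∈ f.base ⁻¹' Z := h
    rw [hJ] at this
    exact hJp' ((PrimeSpectrum.mem_zeroLocus _ _).mp this)
  · -- x₀ ≠ x₁'
    intro h
    have h5 : pt₀ = pt' := hinj (by rw [← h, hpt₀])
    exact hlt₀.ne (congrArg PrimeSpectrum.asIdeal h5).symm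
  · -- x₀ ∈ closure {x₁'}
    have : pt' ⤳ pt₀ := (PrimeSpectrum.le_iff_specializes pt' pt₀).mp hlt₀.le
    have := (this.map hcont)
    rw [hpt₀] at this
    exact specializes_iff_mem_closure.mp this
  · -- x₁' ≠ x₂
    intro h
    have h5 : pt' = pt₂ := hinj (by rw [h, hpt₂])
    exact hlt₂.ne (congrArg PrimeSpectrum.asIdeal h5).symm
  · -- x₁' ∈ closure {x₂}
    have : pt₂ ⤳ pt' := (PrimeSpectrum.le_iff_specializes pt₂ pt').mp hlt₂.le
    have := (this.map hcont)
    rw [hpt₂] at this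
    exact specializes_iff_mem_closure.mp this
end

section
/- Let X be a Noetherian scheme, let U be a dense open subset of X, and let x_0, x_1, …, x_d be an increasing sequence in X. Then there exists an increasing sequence x_0, x_1', …, x_d' in X such that x_i' ∈ U for all i ≥ 1. -/
open AlgebraicGeometry CategoryTheory

section AlgebraAux

universe uu vv

/-- A finitely generated module killed by a maximal ideal is Artinian. -/
lemma aux_isArtinian_of_isTorsionBySet {R : Type uu} [CommRing R] (I : Ideal R) [I.IsMaximal]
    (M : Type vv) [AddCommGroup M] [Module R M] [Module.Finite R M]
    (h : Module.IsTorsionBySet R M (I : Set R)) :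
    IsArtinian R M := by
  letI : Module (R ⧸ I) M := h.module
  haveI : IsScalarTower R (R ⧸ I) M := h.isScalarTower
  letI : Field (R ⧸ I) := Ideal.Quotient.field I
  haveI : Module.Finite (R ⧸ I) M := Module.Finite.of_restrictScalars_finite R (R ⧸ I) M
  have hart : IsArtinian (R ⧸ I) M := isArtinian_of_fg_of_artinian'
  let e : Submodule R M ↪o Submodule (R ⧸ I) M :=
    { toFun := fun p =>
        { carrier := p
          add_mem' := fun ha hb => p.add_mem ha hb
          zero_mem' := p.zero_mem
          smul_mem' := by rintro ⟨b⟩ x hx; exact p.smul_mem b hx }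
      inj' := by
        intro p q hpq
        have h2 : (p : Set M) = (q : Set M) :=
          congrArg (fun s : Submodule (R ⧸ I) M => (s : Set M)) hpq
        exact SetLike.coe_injective h2
      map_rel_iff' := Iff.rfl }
  exact ⟨e.wellFounded hart.wf⟩

/-- A finitely generated module killed by a power of a maximal ideal is Artinian. -/
lemma aux_isArtinian_of_pow_smul_eq_bot {R : Type uu} [CommRing R] [IsNoetherianRing R]
    (I : Ideal R) [I.IsMaximal] :
    ∀ (k : ℕ) (M : Type vv) [AddCommGroup M] [Module R M] [Module.Finite R M],
      I ^ k • (⊤ : Submodule R M) = ⊥ → IsArtinian R M := by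
  intro k
  induction k with
  | zero =>
    intro M _ _ _ h
    rw [pow_zero, Ideal.one_eq_top, Submodule.top_smul] at h
    haveI : Subsingleton M := by
      refine ⟨fun a b => ?_⟩
      have ha := (Submodule.eq_bot_iff (⊤ : Submodule R M)).mp h a Submodule.mem_top
      have hb := (Submodule.eq_bot_iff (⊤ : Submodule R M)).mp h b Submodule.mem_top
      rw [ha, hb]
    exact isArtinian_of_finite
  | succ k ih =>
    intro M _ _ _ h
    haveI : IsNoetherian R M := inferInstance
    set N : Submodule R M := I • (⊤ : Submodule R M) with hNdef
    haveI : Module.Finite R N := ⟨(Submodule.fg_top N).mpr (IsNoetherian.noetherian N)⟩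
    have hN : I ^ k • (⊤ : Submodule R N) = ⊥ := by
      apply Submodule.map_injective_of_injective N.injective_subtype
      rw [Submodule.map_smul'', Submodule.map_bot, Submodule.map_top, Submodule.range_subtype]
      have : I ^ k • N = I ^ (k + 1) • (⊤ : Submodule R M) := by
        rw [pow_succ, ← Ideal.smul_eq_mul, Submodule.smul_assoc]
      rw [this, h]
    haveI : IsArtinian R N := ih N hN
    haveI : IsArtinian R (M ⧸ N) := by
      apply aux_isArtinian_of_isTorsionBySet I
      intro m a
      obtain ⟨m, rfl⟩ := Submodule.Quotient.mk_surjective N m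
      rw [← Submodule.Quotient.mk_smul, Submodule.Quotient.mk_eq_zero]
      exact Submodule.smul_mem_smul a.2 Submodule.mem_top
    exact isArtinian_of_range_eq_ker N.subtype N.mkQ
      (by rw [Submodule.range_subtype, Submodule.ker_mkQ])

/-- A Noetherian ring with a unique prime ideal is Artinian. -/
lemma aux_isArtinianRing_of_unique_prime {S : Type uu} [CommRing S] [IsNoetherianRing S]
    (J : Ideal S) (hJ : J.IsMaximal) (huniq : ∀ P : Ideal S, P.IsPrime → P = J) :
    IsArtinianRing S := by
  have hnil : nilradical S = J := by
    rw [nilradical_eq_sInf]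
    have : {P : Ideal S | P.IsPrime} = {J} := by
      ext P
      simp only [Set.mem_setOf_eq, Set.mem_singleton_iff]
      exact ⟨fun h => huniq P h, fun h => h ▸ hJ.isPrime⟩
    rw [this, sInf_singleton]
  obtain ⟨k, hk⟩ := IsNoetherianRing.isNilpotent_nilradical S
  rw [hnil] at hk
  haveI := hJ
  refine aux_isArtinian_of_pow_smul_eq_bot J k S ?_
  rw [Ideal.smul_eq_mul, Ideal.mul_top, hk]
  rfl

/-- Baby case of Krull's Hauptidealsatz: if the maximal ideal of a Noetherian local
domain is minimal over a nonzero principal ideal, then every prime is `⊥` or maximal. -/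
lemma pit_local {R : Type uu} [CommRing R] [IsNoetherianRing R] [IsLocalRing R] [IsDomain R]
    {a : R} (ha : a ≠ 0)
    (hmin : IsLocalRing.maximalIdeal R ∈ (Ideal.span {a}).minimalPrimes)
    (p : Ideal R) (hp : p.IsPrime) : p = ⊥ ∨ p = IsLocalRing.maximalIdeal R := by
  by_contra hcon
  push_neg at hcon
  obtain ⟨hp0, hpm⟩ := hcon
  set m := IsLocalRing.maximalIdeal R with hm
  have hspan_le : Ideal.span {a} ≤ m := hmin.1.2
  have hspan_ne : Ideal.span {a} ≠ ⊤ :=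
    fun h => (IsLocalRing.maximalIdeal.isMaximal R).ne_top (eq_top_iff.mpr (h ▸ hspan_le))
  -- every prime containing `a` equals `m`
  have hunique : ∀ q : Ideal R, q.IsPrime → a ∈ q → q = m := by
    intro q hq haq
    have hqm : q ≤ m := IsLocalRing.le_maximalIdeal hq.ne_top
    obtain ⟨q', hq'min, hq'le⟩ :=
      Ideal.exists_minimalPrimes_le ((Ideal.span_singleton_le_iff_mem q).mpr haq)
    have hmq' : m ≤ q' := hmin.2 hq'min.1 (hq'le.trans hqm)
    exact le_antisymm hqm (hmq'.trans hq'le)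
  have hap : a ∉ p := fun h => hpm (hunique p hp h)
  -- the localization at `p`
  let Rp := Localization.AtPrime p
  haveI := hp
  haveI : IsNoetherianRing Rp := IsLocalization.isNoetherianRing p.primeCompl Rp ‹_›
  have hinj : Function.Injective (algebraMap R Rp) :=
    IsLocalization.injective Rp p.primeCompl_le_nonZeroDivisors
  set In : ℕ → Ideal Rp := fun n => Ideal.map (algebraMap R Rp) (p ^ n) with hIn
  set qn : ℕ → Ideal R := fun n => (In n).comap (algebraMap R Rp) with hqn
  have hq_anti : ∀ n, qn (n + 1) ≤ qn n := fun n =>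
    Ideal.comap_mono (Ideal.map_mono (Ideal.pow_le_pow_right (Nat.le_succ n)))
  -- `R ⧸ (a)` is Artinian
  let S := R ⧸ Ideal.span {a}
  haveI : Nontrivial S := Ideal.Quotient.nontrivial_iff.mpr hspan_ne
  obtain ⟨J, hJ⟩ := Ideal.exists_maximal S
  have hcomap_eq : ∀ P : Ideal S, P.IsPrime → P.comap (Ideal.Quotient.mk (Ideal.span {a})) = m := by
    intro P hP
    refine hunique _ (hP.comap _) ?_
    have : (Ideal.Quotient.mk (Ideal.span {a})) a = 0 :=
      Ideal.Quotient.eq_zero_iff_mem.mpr (Ideal.mem_span_singleton_self a)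
    simp [Ideal.mem_comap, this]
  have huniqS : ∀ P : Ideal S, P.IsPrime → P = J := by
    intro P hP
    have h1 := hcomap_eq P hP
    have h2 := hcomap_eq J hJ.isPrime
    exact Ideal.comap_injective_of_surjective _ Ideal.Quotient.mk_surjective (h1.trans h2.symm)
  haveI : IsArtinianRing S := aux_isArtinianRing_of_unique_prime J hJ huniqS
  -- the chain `qn n + (a)` stabilizes
  have hchain : ∃ n : ℕ, (qn n).map (Ideal.Quotient.mk (Ideal.span {a}))
      = (qn (n + 1)).map (Ideal.Quotient.mk (Ideal.span {a})) := by
    have hanti : Antitone (fun n => (qn n).map (Ideal.Quotient.mk (Ideal.span {a}))) := by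
      apply antitone_nat_of_succ_le
      intro n
      exact Ideal.map_mono (hq_anti n)
    obtain ⟨n, hn⟩ := IsArtinian.monotone_stabilizes
      (⟨fun n => OrderDual.toDual ((qn n).map (Ideal.Quotient.mk (Ideal.span {a}))),
        fun i j hij => hanti hij⟩ : ℕ →o (Ideal S)ᵒᵈ)
    exact ⟨n, hn (n + 1) (Nat.le_succ n)⟩
  obtain ⟨n, hn⟩ := hchain
  -- hence `qn n ⊔ (a) = qn (n+1) ⊔ (a)`
  have hsup : qn n ⊔ Ideal.span {a} = qn (n + 1) ⊔ Ideal.span {a} := by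
    have h1 := congrArg (Ideal.comap (Ideal.Quotient.mk (Ideal.span {a}))) hn
    rwa [Ideal.comap_map_of_surjective _ Ideal.Quotient.mk_surjective,
      Ideal.comap_map_of_surjective _ Ideal.Quotient.mk_surjective,
      ← RingHom.ker_eq_comap_bot, Ideal.mk_ker] at h1
  -- key step: `qn n ≤ qn (n+1) ⊔ (a) • qn n`
  have hstep : qn n ≤ qn (n + 1) ⊔ Ideal.span {a} • qn n := by
    intro x hx
    have hx' : x ∈ qn (n + 1) ⊔ Ideal.span {a} := by
      rw [← hsup]
      exact Submodule.mem_sup_left hx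
    obtain ⟨y, hy, z, hz, rfl⟩ := Submodule.mem_sup.mp hx'
    obtain ⟨r, rfl⟩ := Ideal.mem_span_singleton'.mp hz
    have hra : r * a ∈ qn n := by
      have : (y + r * a) - y ∈ qn n := Submodule.sub_mem _ hx (hq_anti n hy)
      simpa using this
    have hr : r ∈ qn n := by
      have h1 : algebraMap R Rp (r * a) ∈ In n := hra
      rw [map_mul, mul_comm] at h1
      have hau : a ∈ p.primeCompl := hap
      have hu : IsUnit (algebraMap R Rp a) := IsLocalization.map_units Rp ⟨a, hau⟩
      exact (Ideal.unit_mul_mem_iff_mem _ hu).mp h1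
    refine Submodule.add_mem_sup hy ?_
    rw [Ideal.smul_eq_mul, mul_comm r a]
    exact Ideal.mul_mem_mul (Ideal.mem_span_singleton_self a) hr
  -- Nakayama: `qn n = qn (n+1)`
  have hle : qn n ≤ qn (n + 1) := by
    refine Submodule.le_of_le_smul_of_le_jacobson_bot (IsNoetherian.noetherian _) ?_ hstep
    rw [IsLocalRing.jacobson_eq_maximalIdeal (⊥ : Ideal R) bot_ne_top]
    exact hspan_le
  have hqeq : qn n = qn (n + 1) := le_antisymm hle (hq_anti n)
  -- localize back
  have hIeq : In n = In (n + 1) := by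
    have h1 : Ideal.map (algebraMap R Rp) (qn n) = In n :=
      IsLocalization.map_comap p.primeCompl Rp (In n)
    have h2 : Ideal.map (algebraMap R Rp) (qn (n + 1)) = In (n + 1) :=
      IsLocalization.map_comap p.primeCompl Rp (In (n + 1))
    rw [← h1, ← h2, hqeq]
  set P : Ideal Rp := Ideal.map (algebraMap R Rp) p with hP
  have hPn : P ^ n = P ^ (n + 1) := by
    have e1 : In n = P ^ n := Ideal.map_pow _ _ _
    have e2 : In (n + 1) = P ^ (n + 1) := Ideal.map_pow _ _ _
    rw [← e1, ← e2, hIeq]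
  have hPbot : P ^ n = ⊥ := by
    refine Submodule.eq_bot_of_le_smul_of_le_jacobson_bot P (P ^ n)
      (IsNoetherian.noetherian _) ?_ ?_
    · rw [Ideal.smul_eq_mul, mul_comm, ← pow_succ, ← hPn]
    · rw [IsLocalRing.jacobson_eq_maximalIdeal (⊥ : Ideal Rp) bot_ne_top, hP,
        Localization.AtPrime.map_eq_maximalIdeal]
  -- contradiction: `p ≠ ⊥`
  obtain ⟨t, htp, ht0⟩ : ∃ t, t ∈ p ∧ t ≠ (0 : R) := by
    by_contra hcon
    push_neg at hcon
    exact hp0 ((Submodule.eq_bot_iff p).mpr hcon)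
  have h1 : algebraMap R Rp t ∈ P := Ideal.mem_map_of_mem _ htp
  have h2 : (algebraMap R Rp t) ^ n ∈ P ^ n := Ideal.pow_mem_pow h1 n
  rw [hPbot] at h2
  have ht0' : algebraMap R Rp t ≠ 0 := fun h0 => ht0 (hinj (by rw [h0, map_zero]))
  exact pow_ne_zero n ht0' ((Submodule.mem_bot _).mp h2)

/-- Krull PIT consequence in a Noetherian domain: a prime minimal over a nonzero
principal ideal has no prime strictly below it except `⊥`. -/
lemma pit_domain {R : Type uu} [CommRing R] [IsNoetherianRing R] [IsDomain R]
    {x : R} (hx : x ≠ 0) {q : Ideal R} (hq : q ∈ (Ideal.span {x}).minimalPrimes)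
    (r : Ideal R) (hr : r.IsPrime) (hrq : r < q) : r = ⊥ := by
  haveI hqp : q.IsPrime := hq.1.1
  let Rq := Localization.AtPrime q
  haveI : IsNoetherianRing Rq := IsLocalization.isNoetherianRing q.primeCompl Rq ‹_›
  have hinj : Function.Injective (algebraMap R Rq) :=
    IsLocalization.injective Rq q.primeCompl_le_nonZeroDivisors
  have hx' : algebraMap R Rq x ≠ 0 := fun h => hx (hinj (by rw [h, map_zero]))
  -- the maximal ideal is minimal over `span {x'}`
  have hmq2 : Ideal.map (algebraMap R Rq) q = IsLocalRing.maximalIdeal Rq :=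
    Localization.AtPrime.map_eq_maximalIdeal
  have hmin' : IsLocalRing.maximalIdeal Rq ∈ (Ideal.span {algebraMap R Rq x}).minimalPrimes := by
    constructor
    · refine ⟨(IsLocalRing.maximalIdeal.isMaximal Rq).isPrime, ?_⟩
      rw [Ideal.span_singleton_le_iff_mem, ← hmq2]
      exact Ideal.mem_map_of_mem _ (hq.1.2 (Ideal.mem_span_singleton_self x))
    · rintro Q ⟨hQp, hQx⟩ hQle
      have hcQ : (Q.comap (algebraMap R Rq)).IsPrime := hQp.comap _
      have hcle : Q.comap (algebraMap R Rq) ≤ q := by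
        have := Ideal.comap_mono (f := algebraMap R Rq) hQle
        rwa [show (IsLocalRing.maximalIdeal Rq).comap (algebraMap R Rq) = q from
          Localization.AtPrime.comap_maximalIdeal] at this
      have hxc : x ∈ Q.comap (algebraMap R Rq) := by
        rw [Ideal.mem_comap]
        exact hQx (Ideal.mem_span_singleton_self _)
      have : q ≤ Q.comap (algebraMap R Rq) :=
        hq.2 ⟨hcQ, (Ideal.span_singleton_le_iff_mem _).mpr hxc⟩ hcle
      have hceq : Q.comap (algebraMap R Rq) = q := le_antisymm hcle this
      have hQeq : Q = Ideal.map (algebraMap R Rq) q :=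
        (IsLocalization.map_comap q.primeCompl Rq Q).symm.trans
          (congrArg (Ideal.map (algebraMap R Rq)) hceq)
      exact (hmq2.symm.trans hQeq.symm).le
  -- transfer `r`
  have hdisj : Disjoint ((q.primeCompl : Submonoid R) : Set R) (r : Set R) := by
    rw [Set.disjoint_left]
    intro b hb hb'
    exact hb (hrq.le hb')
  have hrp' : (Ideal.map (algebraMap R Rq) r).IsPrime :=
    IsLocalization.isPrime_of_isPrime_disjoint q.primeCompl Rq r hr hdisj
  have hrc : (Ideal.map (algebraMap R Rq) r).comap (algebraMap R Rq) = r :=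
    IsLocalization.comap_map_of_isPrime_disjoint q.primeCompl Rq hr hdisj
  rcases pit_local hx' hmin' (Ideal.map (algebraMap R Rq) r) hrp' with h | h
  · rw [← hrc, h]
    refine le_antisymm ?_ bot_le
    intro b hb
    rw [Ideal.mem_comap, Ideal.mem_bot] at hb
    exact (Submodule.mem_bot R).mpr (hinj (by rw [hb, map_zero]))
  · exfalso
    have := hrc
    rw [h, show (IsLocalRing.maximalIdeal Rq).comap (algebraMap R Rq) = q from
      Localization.AtPrime.comap_maximalIdeal] at this
    exact hrq.ne this.symm

/-- In a Noetherian local domain which is not of dimension `≤ 1`, for any nonzero `a`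
there is a nonzero non-maximal prime avoiding `a`. -/
lemma avoid_local {R : Type uu} [CommRing R] [IsNoetherianRing R] [IsLocalRing R] [IsDomain R]
    {p : Ideal R} (hp : p.IsPrime) (hp0 : p ≠ ⊥) (hpm : p ≠ IsLocalRing.maximalIdeal R)
    {a : R} (ha : a ≠ 0) :
    ∃ q : Ideal R, q.IsPrime ∧ q ≠ ⊥ ∧ q ≠ IsLocalRing.maximalIdeal R ∧ a ∉ q := by
  by_cases hap : a ∈ p
  case neg => exact ⟨p, hp, hp0, hpm, hap⟩
  set m := IsLocalRing.maximalIdeal R with hm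
  have hpom : p ≤ m := IsLocalRing.le_maximalIdeal hp.ne_top
  have ham : a ∈ m := hpom hap
  have hfin : (Ideal.span {a}).minimalPrimes.Finite := by
    rw [Ideal.minimalPrimes_eq_comap]
    exact (minimalPrimes.finite_of_isNoetherianRing _).image _
  have hne_m : ∀ q ∈ (Ideal.span {a}).minimalPrimes, q ≠ m := by
    intro q hq hqm
    rcases pit_local ha (show m ∈ (Ideal.span {a}).minimalPrimes by rw [← hqm]; exact hq) p hp with h | h
    · exact hp0 h
    · exact hpm h
  classical
  have hnotsub : ¬ ((m : Set R) ⊆ ⋃ q ∈ hfin.toFinset, (q : Set R)) := by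
    intro hsub
    obtain ⟨q, hqs, hle⟩ := (Ideal.subset_union_prime ⊥ ⊥
      (fun q hq _ _ => (hfin.mem_toFinset.mp hq).1.1)).mp hsub
    have hq := hfin.mem_toFinset.mp hqs
    have hqm : q = m := ((IsLocalRing.maximalIdeal.isMaximal R).eq_of_le hq.1.1.ne_top hle).symm
    exact hne_m q hq hqm
  obtain ⟨x, hxm, hxn⟩ := Set.not_subset.mp hnotsub
  have hxq : ∀ q ∈ (Ideal.span {a}).minimalPrimes, x ∉ q := by
    intro q hq hxq
    exact hxn (Set.mem_biUnion (hfin.mem_toFinset.mpr hq) hxq)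
  have hx0 : x ≠ 0 := by
    obtain ⟨q0, hq0, -⟩ :=
      Ideal.exists_minimalPrimes_le ((Ideal.span_singleton_le_iff_mem m).mpr ham)
    exact fun h => hxq q0 hq0 (h ▸ q0.zero_mem)
  obtain ⟨q, hqmin, hqle⟩ :=
    Ideal.exists_minimalPrimes_le ((Ideal.span_singleton_le_iff_mem m).mpr hxm)
  have hqprime : q.IsPrime := hqmin.1.1
  have hxq' : x ∈ q := hqmin.1.2 (Ideal.mem_span_singleton_self x)
  have hq0 : q ≠ ⊥ := fun h => hx0 (by simpa [h] using hxq')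
  have hqm : q ≠ m := by
    intro h
    rcases pit_local hx0 (show m ∈ (Ideal.span {x}).minimalPrimes by rw [← h]; exact hqmin) p hp with h' | h'
    · exact hp0 h'
    · exact hpm h'
  refine ⟨q, hqprime, hq0, hqm, ?_⟩
  intro haq
  obtain ⟨q', hq'min, hq'le⟩ :=
    Ideal.exists_minimalPrimes_le ((Ideal.span_singleton_le_iff_mem q).mpr haq)
  have hlt : q' < q := lt_of_le_of_ne hq'le (fun h => hxq q' hq'min (h ▸ hxq'))
  have hbot : q' = ⊥ := pit_domain hx0 hqmin q' hq'min.1.1 hlt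
  have haq' : a ∈ q' := hq'min.1.2 (Ideal.mem_span_singleton_self a)
  rw [hbot] at haq'
  exact ha ((Submodule.mem_bot R).mp haq')

/-- Main algebraic lemma: if `p0 < p1 < p2` are primes in a Noetherian ring and `a ∉ p0`, then
there is a prime `q` with `p0 < q < p2` and `a ∉ q`. -/
lemma exists_prime_between {A : Type uu} [CommRing A] [IsNoetherianRing A]
    {p0 p1 p2 : Ideal A} (h0 : p0.IsPrime) (h1 : p1.IsPrime) (h2 : p2.IsPrime)
    (h01 : p0 < p1) (h12 : p1 < p2) {a : A} (ha : a ∉ p0) :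
    ∃ q : Ideal A, q.IsPrime ∧ p0 < q ∧ q < p2 ∧ a ∉ q := by
  haveI := h0
  let B0 := A ⧸ p0
  let f : A →+* B0 := Ideal.Quotient.mk p0
  have hfs : Function.Surjective f := Ideal.Quotient.mk_surjective
  have hker : RingHom.ker f = p0 := Ideal.mk_ker
  set p1' := p1.map f with hp1'
  set p2' := p2.map f with hp2'
  haveI h1' : p1'.IsPrime := Ideal.map_isPrime_of_surjective hfs ((le_of_eq hker).trans h01.le)
  haveI h2' : p2'.IsPrime :=
    Ideal.map_isPrime_of_surjective hfs ((le_of_eq hker).trans (h01.le.trans h12.le))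
  have hcm1 : p1'.comap f = p1 := by
    rw [hp1', Ideal.comap_map_of_surjective f hfs, ← RingHom.ker_eq_comap_bot, hker,
      sup_eq_left.mpr h01.le]
  have hcm2 : p2'.comap f = p2 := by
    rw [hp2', Ideal.comap_map_of_surjective f hfs, ← RingHom.ker_eq_comap_bot, hker,
      sup_eq_left.mpr (h01.le.trans h12.le)]
  have h12' : p1' < p2' := by
    refine lt_of_le_of_ne (Ideal.map_mono h12.le) (fun h => h12.ne ?_)
    rw [← hcm1, ← hcm2, h]
  have h1b : p1' ≠ ⊥ := by
    intro h
    apply h01.ne'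
    rw [← hcm1, h, ← RingHom.ker_eq_comap_bot, hker]
  -- localize `B0` at `p2'`
  let B := Localization.AtPrime p2'
  haveI hB0noeth : IsNoetherianRing B0 := Ideal.Quotient.isNoetherianRing p0
  haveI : IsNoetherianRing B := IsLocalization.isNoetherianRing p2'.primeCompl B hB0noeth
  have hinj : Function.Injective (algebraMap B0 B) :=
    IsLocalization.injective B p2'.primeCompl_le_nonZeroDivisors
  set g := algebraMap B0 B with hg
  have hdisj : Disjoint ((p2'.primeCompl : Submonoid B0) : Set B0) (p1' : Set B0) := by
    rw [Set.disjoint_left]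
    intro b hb hb'
    exact hb (h12'.le hb')
  haveI hP : (p1'.map g).IsPrime :=
    IsLocalization.isPrime_of_isPrime_disjoint p2'.primeCompl B p1' h1' hdisj
  have hPc : (p1'.map g).comap g = p1' :=
    IsLocalization.comap_map_of_isPrime_disjoint p2'.primeCompl B h1' hdisj
  have hPb : p1'.map g ≠ ⊥ := by
    intro h
    apply h1b
    rw [← hPc, h]
    refine le_antisymm ?_ bot_le
    intro b hb
    rw [Ideal.mem_comap, Ideal.mem_bot] at hb
    exact (Submodule.mem_bot B0).mpr (hinj (by rw [hb, map_zero]))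
  have hPm : p1'.map g ≠ IsLocalRing.maximalIdeal B := by
    intro h
    have := hPc
    rw [h, show (IsLocalRing.maximalIdeal B).comap g = p2' from
      Localization.AtPrime.comap_maximalIdeal] at this
    exact h12'.ne this.symm
  have haf : f a ≠ 0 := by
    intro h
    exact ha (by rwa [Ideal.Quotient.eq_zero_iff_mem] at h)
  have ha' : g (f a) ≠ 0 := fun h => haf (hinj (by rw [h, map_zero]))
  obtain ⟨Q, hQp, hQ0, hQm, haQ⟩ := avoid_local hP hPb hPm ha'
  -- pull back to `B0`
  set q' := Q.comap g with hq'def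
  haveI hq'p : q'.IsPrime := hQp.comap g
  have hmapq' : q'.map g = Q := IsLocalization.map_comap p2'.primeCompl B Q
  have hq'le : q' ≤ p2' := by
    have h1 : Q ≤ IsLocalRing.maximalIdeal B := IsLocalRing.le_maximalIdeal hQp.ne_top
    have h2 := Ideal.comap_mono (f := g) h1
    rwa [show (IsLocalRing.maximalIdeal B).comap g = p2' from
      Localization.AtPrime.comap_maximalIdeal] at h2
  have hq'lt : q' < p2' := by
    refine lt_of_le_of_ne hq'le (fun h => hQm ?_)
    rw [← hmapq', h, hg, Localization.AtPrime.map_eq_maximalIdeal]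
  have hq'0 : q' ≠ ⊥ := fun h => hQ0 (by rw [← hmapq', h, Ideal.map_bot])
  have haq' : f a ∉ q' := fun h => haQ h
  -- pull back to `A`
  set q := q'.comap f with hqdef
  haveI hqp : q.IsPrime := hq'p.comap f
  have hq0le : p0 ≤ q := by
    intro b hb
    show f b ∈ q'
    rw [show f b = 0 from Ideal.Quotient.eq_zero_iff_mem.mpr hb]
    exact q'.zero_mem
  have hmapq : q.map f = q' := Ideal.map_comap_of_surjective f hfs q'
  have hqle2 : q ≤ p2 := by
    have := Ideal.comap_mono (f := f) hq'lt.le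
    rwa [hcm2] at this
  have hqlt2 : q < p2 := by
    refine lt_of_le_of_ne hqle2 (fun h => hq'lt.ne ?_)
    rw [← hmapq, h]
  have hq0lt : p0 < q := by
    refine lt_of_le_of_ne hq0le (fun h => hq'0 ?_)
    rw [← hmapq, ← h, Ideal.map_quotient_self]
  exact ⟨q, hqp, hq0lt, hqlt2, fun h => haq' h⟩

end AlgebraAux

section TopAux

universe uu

/-- `exists_prime_between` in the prime spectrum. -/
lemma spec_between {A : Type uu} [CommRing A] [IsNoetherianRing A]
    {x w z : PrimeSpectrum A} (hzw : z ⤳ w) (hwx : w ⤳ x) (hxw : x ≠ w) (hwz : w ≠ z)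
    {T : Set (PrimeSpectrum A)} (hT : IsClosed T) (hzT : z ∉ T) :
    ∃ y : PrimeSpectrum A, z ⤳ y ∧ y ⤳ x ∧ y ≠ x ∧ y ≠ z ∧ y ∉ T := by
  rw [← PrimeSpectrum.le_iff_specializes] at hzw hwx
  obtain ⟨s, rfl⟩ := (PrimeSpectrum.isClosed_iff_zeroLocus T).mp hT
  obtain ⟨a, has, haz⟩ := Set.not_subset.mp hzT
  have h01 : z.asIdeal < w.asIdeal :=
    lt_of_le_of_ne hzw (fun h => hwz (PrimeSpectrum.ext h.symm))
  have h12 : w.asIdeal < x.asIdeal :=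
    lt_of_le_of_ne hwx (fun h => hxw (PrimeSpectrum.ext h.symm))
  obtain ⟨q, hq, hlt1, hlt2, haq⟩ :=
    exists_prime_between z.isPrime w.isPrime x.isPrime h01 h12 haz
  refine ⟨⟨q, hq⟩, ?_, ?_, ?_, ?_, ?_⟩
  · exact (PrimeSpectrum.le_iff_specializes _ _).mp hlt1.le
  · exact (PrimeSpectrum.le_iff_specializes _ _).mp hlt2.le
  · exact fun h => hlt2.ne (congrArg PrimeSpectrum.asIdeal h)
  · exact fun h => hlt1.ne' (congrArg PrimeSpectrum.asIdeal h)
  · intro h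
    exact haq ((PrimeSpectrum.mem_zeroLocus _ _).mp h has)

/-- The scheme version: given specializations `z ⤳ w ⤳ x` (all strict) on a locally Noetherian
scheme and a closed set `T` avoiding `z`, there is `y` strictly between `x` and `z` avoiding
`T`. -/
lemma scheme_between (X : Scheme) [IsLocallyNoetherian X]
    {x w z : X} (hzw : z ⤳ w) (hwx : w ⤳ x) (hxw : x ≠ w) (hwz : w ≠ z)
    {T : Set X} (hT : IsClosed T) (hzT : z ∉ T) :
    ∃ y : X, z ⤳ y ∧ y ⤳ x ∧ y ≠ x ∧ y ≠ z ∧ y ∉ T := by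
  obtain ⟨_, ⟨U, hU, rfl⟩, hxU, -⟩ :=
    X.isBasis_affineOpens.exists_subset_of_mem_open (Set.mem_univ x) isOpen_univ
  haveI : IsNoetherianRing Γ(X, U) := IsLocallyNoetherian.component_noetherian ⟨U, hU⟩
  set f := hU.fromSpec with hf
  have hrange : Set.range f.base = (U : Set X) := hU.range_fromSpec
  obtain ⟨px, hpx⟩ : x ∈ Set.range f.base := by rw [hrange]; exact hxU
  obtain ⟨pw, hpw⟩ : w ∈ Set.range f.base := by
    rw [hrange]; exact hwx.mem_open U.isOpen hxU
  obtain ⟨pz, hpz⟩ : z ∈ Set.range f.base := by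
    rw [hrange]
    exact (hzw.trans hwx).mem_open U.isOpen hxU
  have hemb := (haveI := hU.isOpenImmersion_fromSpec; f.isOpenEmbedding)
  have h1 : pz ⤳ pw := hemb.toIsInducing.specializes_iff.mp (by rw [hpz, hpw]; exact hzw)
  have h2 : pw ⤳ px := hemb.toIsInducing.specializes_iff.mp (by rw [hpw, hpx]; exact hwx)
  have hne1 : px ≠ pw := fun h => hxw (by rw [← hpx, ← hpw, h])
  have hne2 : pw ≠ pz := fun h => hwz (by rw [← hpw, ← hpz, h])
  have hT' : IsClosed (f.base ⁻¹' T) := hT.preimage f.base.hom.continuous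
  have hzT' : pz ∉ f.base ⁻¹' T := by
    simp only [Set.mem_preimage, hpz]
    exact hzT
  obtain ⟨py, hy1, hy2, hy3, hy4, hy5⟩ := spec_between h1 h2 hne1 hne2 hT' hzT'
  refine ⟨f.base py, ?_, ?_, ?_, ?_, ?_⟩
  · rw [← hpz]; exact hy1.map f.base.hom.continuous
  · rw [← hpx]; exact hy2.map f.base.hom.continuous
  · intro h
    exact hy3 (hemb.injective (by rw [h, ← hpx]))
  · intro h
    exact hy4 (hemb.injective (by rw [h, ← hpz]))
  · exact hy5

/-- Replacing the top of a nontrivial specialization by a generic point lying in a given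
dense open set. -/
lemma generic_top {Y : Type uu} [TopologicalSpace Y] [TopologicalSpace.NoetherianSpace Y]
    [QuasiSober Y] [T0Space Y] {x x1 : Y} (h : x1 ⤳ x) (hne : x ≠ x1)
    {U : Set Y} (hUo : IsOpen U) (hUd : Dense U) :
    ∃ η : Y, η ∈ U ∧ η ⤳ x ∧ η ≠ x := by
  set C := irreducibleComponent x1 with hCdef
  have hC : C ∈ irreducibleComponents Y := irreducibleComponent_mem_irreducibleComponents x1
  obtain ⟨o, ho, hone, hoC⟩ :=
    TopologicalSpace.NoetherianSpace.exists_isOpen_nonempty_subset_irreducibleComponent C hC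
  have hCclosed : IsClosed C := isClosed_irreducibleComponent
  have hCirr : IsIrreducible C := isIrreducible_irreducibleComponent
  set η := hCirr.genericPoint with hηdef
  have hgen : closure ({η} : Set Y) = C := hCirr.closure_genericPoint hCclosed
  obtain ⟨u, huU, huo⟩ : (U ∩ o).Nonempty :=
    hUd.inter_open_nonempty o ho hone |>.imp
      (fun a ha => ⟨ha.2, ha.1⟩)
  have huC : u ∈ C := hoC huo
  have hηU : η ∈ U := by
    have hu : u ∈ closure ({η} : Set Y) := hgen ▸ huC
    rcases mem_closure_iff.mp hu U hUo huU with ⟨v, hvU, hv⟩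
    rwa [← Set.mem_singleton_iff.mp hv]
  have hx1C : x1 ∈ C := mem_irreducibleComponent
  have hηx : η ⤳ x := by
    rw [specializes_iff_mem_closure, hgen]
    have hsub : closure ({x1} : Set Y) ⊆ C :=
      closure_minimal (Set.singleton_subset_iff.mpr hx1C) hCclosed
    exact hsub (specializes_iff_mem_closure.mp h)
  have hηne : η ≠ x := by
    intro he
    have hx1cl : x1 ∈ closure ({x} : Set Y) := by
      rw [← he, hgen]; exact hx1C
    have h1 : x ⤳ x1 := specializes_iff_mem_closure.mpr hx1cl
    exact hne (h1.antisymm h).eq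
  exact ⟨η, hηU, hηx, hηne⟩

end TopAux

/-- The `ℕ`-indexed version of the main theorem. -/
lemma nat_version (X : Scheme) [AlgebraicGeometry.IsNoetherian X] {U : Set X} (hUo : IsOpen U)
    (hUd : Dense U) :
    ∀ (d : ℕ) (x : ℕ → X), (∀ i < d, x i ≠ x (i + 1) ∧ x (i + 1) ⤳ x i) →
    ∃ y : ℕ → X, y 0 = x 0 ∧ (∀ i < d, y i ≠ y (i + 1) ∧ y (i + 1) ⤳ y i) ∧
      ∀ i, 1 ≤ i → i ≤ d → y i ∈ U := by
  intro d
  induction d with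
  | zero =>
    intro x _
    exact ⟨x, rfl, fun i hi => absurd hi (by omega), fun i h1 h2 => absurd (h1.trans h2) (by omega)⟩
  | succ d ih =>
    intro x hx
    obtain ⟨y, hy0, hyinc, hyU⟩ := ih (fun i => x (i + 1)) (fun i hi => hx (i + 1) (by omega))
    rcases Nat.eq_zero_or_pos d with hd | hd
    · subst hd
      obtain ⟨h01, hspec⟩ := hx 0 (by omega)
      obtain ⟨η, hηU, hηx, hηne⟩ := generic_top hspec h01 hUo hUd
      refine ⟨fun n => if n = 0 then x 0 else η, by simp, ?_, ?_⟩
      · intro i hi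
        have hi0 : i = 0 := by omega
        subst hi0
        simpa using ⟨hηne.symm, hηx⟩
      · intro i hone hle
        have hi1 : i = 1 := by omega
        subst hi1
        simpa using hηU
    · obtain ⟨h01, hs01⟩ := hx 0 (by omega)
      obtain ⟨hy01, hs12⟩ := hyinc 0 hd
      have hy1U : y 1 ∈ U := hyU 1 le_rfl hd
      have hzw : y 1 ⤳ x 1 := by rw [← hy0]; exact hs12
      have hwz : x 1 ≠ y 1 := by rw [← hy0]; exact hy01
      obtain ⟨b, hb1, hb2, hb3, hb4, hb5⟩ :=
        scheme_between X hzw hs01 h01 hwz hUo.isClosed_compl (by simpa using hy1U)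
      refine ⟨fun n => match n with
        | 0 => x 0
        | 1 => b
        | (k + 2) => y (k + 1), rfl, ?_, ?_⟩
      · intro i hi
        match i with
        | 0 => exact ⟨Ne.symm hb3, hb2⟩
        | 1 => exact ⟨hb4, hb1⟩
        | (k + 2) => exact hyinc (k + 1) (by omega)
      · intro i hone hle
        match i with
        | 1 => simpa using hb5
        | (k + 2) => exact hyU (k + 1) (by omega) (by omega)

theorem stmt_3 (X : Scheme) [AlgebraicGeometry.IsNoetherian X]
    (U : Set X) (hUopen : IsOpen U) (hUdense : Dense U)
    (d : ℕ) (x : Fin (d + 1) → X) (hx : IsIncreasingSeq x) :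
    ∃ x' : Fin (d + 1) → X, IsIncreasingSeq x' ∧ x' 0 = x 0 ∧
      ∀ i : Fin (d + 1), i ≠ 0 → x' i ∈ U := by
  classical
  set xe : ℕ → X := fun n => x ⟨min n d, Nat.lt_succ_of_le (Nat.min_le_right n d)⟩ with hxe_def
  have hxe : ∀ i < d, xe i ≠ xe (i + 1) ∧ xe (i + 1) ⤳ xe i := by
    intro i hi
    have h1 : xe i = x (Fin.castSucc ⟨i, hi⟩) := by
      simp only [hxe_def]
      congr 1
      exact Fin.ext (by simp [Nat.min_eq_left hi.le])
    have h2 : xe (i + 1) = x (Fin.succ ⟨i, hi⟩) := by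
      simp only [hxe_def]
      congr 1
      exact Fin.ext (by simp [Nat.min_eq_left hi])
    rw [h1, h2]
    obtain ⟨hne, hcl⟩ := hx ⟨i, hi⟩
    exact ⟨hne, specializes_iff_mem_closure.mpr hcl⟩
  obtain ⟨y, hy0, hyinc, hyU⟩ := nat_version X hUopen hUdense d xe hxe
  refine ⟨fun i => y i.val, ?_, ?_, ?_⟩
  · intro i
    obtain ⟨hne, hsp⟩ := hyinc i.val i.isLt
    have hc : ((Fin.castSucc i : Fin (d + 1)) : ℕ) = i.val := rfl
    have hs : ((Fin.succ i : Fin (d + 1)) : ℕ) = i.val + 1 := rfl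
    constructor
    · simpa only [hc, hs] using hne
    · simpa only [hc, hs] using specializes_iff_mem_closure.mp hsp
  · show y ((0 : Fin (d + 1)) : ℕ) = x 0
    have h0 : ((0 : Fin (d + 1)) : ℕ) = 0 := rfl
    rw [h0, hy0]
    simp only [hxe_def]
    congr 1
  · intro i hi
    have hiv : i.val ≠ 0 := fun h => hi (Fin.ext h)
    exact hyU i.val (by omega) (by have := i.isLt; omega)
end

section
/- Let X be a Noetherian scheme and let Y be a constructible subset of the underlying topological space of X. Then every point y' of the closure cl(Y) of Y in X belongs to the closure of a single point y of Y, i.e. there exists y ∈ Y with y' ∈ cl({y}). -/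
open AlgebraicGeometry CategoryTheory

/-- A subset of a topological space is *constructible* if it is a finite union of
intersections of an open set with a closed set. -/
def IsConstructibleSet {T : Type*} [TopologicalSpace T] (Y : Set T) : Prop :=
  ∃ S : Finset (Set T × Set T), (∀ p ∈ S, IsOpen p.1 ∧ IsClosed p.2) ∧
    Y = ⋃ p ∈ S, p.1 ∩ p.2

open TopologicalSpace in
lemma key_locally_closed {T : Type*} [TopologicalSpace T] [NoetherianSpace T] [QuasiSober T]
    (U Z : Set T) (hU : IsOpen U) (hZ : IsClosed Z) :
    ∀ y' ∈ closure (U ∩ Z), ∃ y ∈ U ∩ Z, y' ∈ closure ({y} : Set T) := by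
  intro y' hy'
  -- Take a minimal closed set `C` with `y' ∈ closure (U ∩ Z ∩ C)`.
  have hwf : WellFounded (· < · : Closeds T → Closeds T → Prop) :=
    wellFounded_lt
  set P : Set (Closeds T) := {C | y' ∈ closure (U ∩ Z ∩ (C : Set T))} with hP
  have hPne : P.Nonempty := ⟨⊤, by
    simp only [hP, Set.mem_setOf_eq, Closeds.coe_top, Set.inter_univ]
    exact hy'⟩
  obtain ⟨C, hC, hmin⟩ := hwf.has_min P hPne
  have hmin' : ∀ D : Closeds T, D ∈ P → ¬ D < C := hmin
  -- Replace `C` with the closure of `U ∩ Z ∩ C`; by minimality it equals `C`.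
  have hCeq : (C : Set T) = closure (U ∩ Z ∩ (C : Set T)) := by
    set D : Closeds T := ⟨closure (U ∩ Z ∩ (C : Set T)), isClosed_closure⟩ with hD
    have hDP : D ∈ P := by
      have hsub : U ∩ Z ∩ (C : Set T) ⊆ U ∩ Z ∩ (D : Set T) := by
        intro x hx
        exact ⟨hx.1, subset_closure hx⟩
      exact closure_mono hsub hC
    have hDC : (D : Set T) ⊆ (C : Set T) :=
      closure_minimal (fun x hx => hx.2) C.isClosed
    have hDCeq : D = C := by
      by_contra hne
      exact hmin' D hDP (lt_of_le_of_ne (by exact_mod_cast hDC) hne)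
    exact (congrArg SetLike.coe hDCeq).symm
  -- `C` is irreducible.
  have hne : (U ∩ Z ∩ (C : Set T)).Nonempty := by
    by_contra h
    rw [Set.not_nonempty_iff_eq_empty] at h
    simp [hP, h] at hC
  have hCne : (C : Set T).Nonempty := hne.mono (fun x hx => hx.2)
  have hirr : IsIrreducible (C : Set T) := by
    constructor
    · exact hCne
    · rw [isPreirreducible_iff_isClosed_union_isClosed]
      intro A B hA hB hCAB
      by_contra hcon
      push_neg at hcon
      obtain ⟨hnA, hnB⟩ := hcon
      -- y' lies in the closure of one of the two pieces
      have hsplit : U ∩ Z ∩ (C : Set T) ⊆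
          (U ∩ Z ∩ ((C : Set T) ∩ A)) ∪ (U ∩ Z ∩ ((C : Set T) ∩ B)) := by
        intro x hx
        rcases hCAB hx.2 with h | h
        · exact Or.inl ⟨hx.1, hx.2, h⟩
        · exact Or.inr ⟨hx.1, hx.2, h⟩
      have : y' ∈ closure (U ∩ Z ∩ ((C : Set T) ∩ A)) ∪
          closure (U ∩ Z ∩ ((C : Set T) ∩ B)) := by
        have := closure_mono hsplit hC
        rwa [closure_union] at this
      have hlt : ∀ W : Set T, IsClosed W → ¬ (C : Set T) ⊆ W →
          y' ∈ closure (U ∩ Z ∩ ((C : Set T) ∩ W)) → False := by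
        intro W hW hWsub hyW
        have : (⟨(C : Set T) ∩ W, C.isClosed.inter hW⟩ : Closeds T) ∈ P := hyW
        refine hmin' _ this (lt_of_le_of_ne ?_ ?_)
        · exact_mod_cast (Set.inter_subset_left : (C : Set T) ∩ W ⊆ C)
        · intro heq
          apply hWsub
          have : (C : Set T) ∩ W = (C : Set T) := congrArg SetLike.coe heq
          intro x hx
          rw [← this] at hx
          exact hx.2
      rcases this with h | h
      · exact hlt A hA hnA h
      · exact hlt B hB hnB h
  -- Take the generic point of `C`.
  obtain ⟨η, hη⟩ := QuasiSober.sober hirr C.isClosed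
  have hηC : closure ({η} : Set T) = (C : Set T) := hη
  refine ⟨η, ⟨?_, ?_⟩, ?_⟩
  · -- η ∈ U
    by_contra hηU
    have : closure ({η} : Set T) ⊆ Uᶜ :=
      closure_minimal (by simpa using hηU) (hU.isClosed_compl)
    obtain ⟨x, hx⟩ := hne
    exact (this (hηC ▸ hx.2)) hx.1.1
  · -- η ∈ Z
    have : (C : Set T) ⊆ Z := by
      rw [hCeq]
      exact closure_minimal (fun x hx => hx.1.2) hZ
    exact this (hη.mem)
  · rw [hηC]
    exact closure_minimal Set.inter_subset_right C.isClosed hC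

theorem stmt_4 (X : Scheme) [AlgebraicGeometry.IsNoetherian X]
    (Y : Set X) (hY : IsConstructibleSet Y) :
    ∀ y' ∈ closure Y, ∃ y ∈ Y, y' ∈ closure ({y} : Set X) := by
  obtain ⟨S, hS, rfl⟩ := hY
  intro y' hy'
  rw [S.closure_biUnion] at hy'
  obtain ⟨p, hpS, hyp⟩ := Set.mem_iUnion₂.mp hy'
  obtain ⟨y, hy, hy'y⟩ := key_locally_closed p.1 p.2 (hS p hpS).1 (hS p hpS).2 y' hyp
  exact ⟨y, Set.mem_iUnion₂.mpr ⟨p, hpS, hy⟩, hy'y⟩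
end

section
/- Let q : W → X be a morphism of schemes all of whose fibers are zero-dimensional (for every x ∈ X the underlying topological space of q⁻¹(x) has Krull dimension ≤ 0), and let y_0, y_1, …, y_m be an increasing sequence in W. Then q(y_0), q(y_1), …, q(y_m) is an increasing sequence in X. -/
open AlgebraicGeometry CategoryTheory

/-- In a `T0` space, a strict specialization `a ⤳ b`, `a ≠ b` forces the
topological Krull dimension to be at least `1`, so it is not `≤ 0`. -/
lemma aux_krullDim_pos {T : Type*} [TopologicalSpace T] [T0Space T] (a b : T)
    (hne : a ≠ b) (hsp : b ⤳ a) : ¬ topologicalKrullDim T ≤ 0 := by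
  intro h
  have hAB : (closure {a} : Set T) ⊆ closure {b} :=
    closure_minimal (Set.singleton_subset_iff.mpr hsp.mem_closure) isClosed_closure
  have hne' : (closure {a} : Set T) ≠ closure {b} := by
    intro he
    refine hne (Inseparable.eq ?_).symm
    refine hsp.antisymm ?_
    rw [specializes_iff_mem_closure, he]
    exact subset_closure rfl
  let A : TopologicalSpace.IrreducibleCloseds T :=
    ⟨closure {a}, isIrreducible_singleton.closure, isClosed_closure⟩
  let B : TopologicalSpace.IrreducibleCloseds T :=
    ⟨closure {b}, isIrreducible_singleton.closure, isClosed_closure⟩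
  have hlt : A < B := lt_of_le_of_ne hAB (fun he => hne' (congrArg (fun s => s.carrier) he))
  have := Order.LTSeries.length_le_krullDim ((RelSeries.singleton _ A).snoc B hlt)
  rw [topologicalKrullDim] at h
  have h1 : (1 : WithBot ℕ∞) ≤ Order.krullDim (TopologicalSpace.IrreducibleCloseds T) := by
    simpa [RelSeries.snoc, RelSeries.singleton, RelSeries.append] using this
  exact absurd (h1.trans h) (by decide)

theorem stmt_6 (W X : Scheme) (q : W ⟶ X)
    (hfib : ∀ x : X, topologicalKrullDim (q.base ⁻¹' ({x} : Set X)) ≤ 0)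
    (m : ℕ) (y : Fin (m + 1) → W) (hy : IsIncreasingSeq y) :
    IsIncreasingSeq (fun i => q.base (y i)) := by
  intro i
  obtain ⟨hne, hcl⟩ := hy i
  have hsp : y i.succ ⤳ y i.castSucc := specializes_iff_mem_closure.mpr hcl
  have hqsp : q.base (y i.succ) ⤳ q.base (y i.castSucc) := hsp.map q.base.hom.continuous
  refine ⟨?_, specializes_iff_mem_closure.mp hqsp⟩
  intro heq
  -- both points lie in the fiber over x := q.base (y i.succ)
  set x := q.base (y i.succ) with hx
  have ha : y i.castSucc ∈ q.base ⁻¹' ({x} : Set X) := by simp [heq, hx]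
  have hb : y i.succ ∈ q.base ⁻¹' ({x} : Set X) := by simp [hx]
  set F := (q.base ⁻¹' ({x} : Set X)) with hF
  let a : F := ⟨y i.castSucc, ha⟩
  let b : F := ⟨y i.succ, hb⟩
  have hspF : b ⤳ a := by
    rw [← Topology.IsInducing.subtypeVal.specializes_iff]
    exact hsp
  have hneF : a ≠ b := fun h => hne (congrArg Subtype.val h)
  exact aux_krullDim_pos a b hneF hspF (hfib x)
end

section
/- Let p : Y → X be a proper morphism and e : A → X a closed immersion of schemes such that the induced morphism p⁻¹(X ∖ e(A)) → X ∖ e(A) is an isomorphism, where X ∖ e(A) is the open complement of e(A), and let B = A ×_X Y. Then the diagonal Δ : Y → Y ×_X Y is a closed immersion, the natural morphism B ×_A B → Y ×_X Y is a closed immersion, and the underlying set of Y ×_X Y is the union of the image of Δ and the image of B ×_A B. -/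
open AlgebraicGeometry CategoryTheory CategoryTheory.Limits

/-- The square `V = pullback p U.ι → pullback p p` over `U.ι` is a pullback when
`p` is an isomorphism over `U`. -/
lemma aux_isPullback {X Y : Scheme} (p : Y ⟶ X) (U : X.Opens)
    [IsIso (pullback.snd p U.ι)] :
    IsPullback (pullback.fst p U.ι ≫ pullback.diagonal p) (pullback.snd p U.ι)
      (pullback.fst p p ≫ p) U.ι := by
  have w : (pullback.fst p U.ι ≫ pullback.diagonal p) ≫ pullback.fst p p ≫ p =
      pullback.snd p U.ι ≫ U.ι := by
    simp [pullback.condition]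
  refine ⟨⟨w⟩, ⟨PullbackCone.isLimitAux _ (fun s => pullback.lift (s.fst ≫ pullback.fst p p) s.snd
    (by rw [Category.assoc]; exact s.condition)) (fun s => ?_) (fun s => pullback.lift_snd _ _ _) (fun s (m : s.pt ⟶ pullback p U.ι) hm => ?_)⟩⟩
  · -- fac left
    have key : s.fst ≫ pullback.fst p p = s.fst ≫ pullback.snd p p := by
      have h1 : (s.fst ≫ pullback.fst p p) ≫ p = s.snd ≫ U.ι := by
        rw [Category.assoc]; exact s.condition
      have h2 : (s.fst ≫ pullback.snd p p) ≫ p = s.snd ≫ U.ι := by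
        rw [Category.assoc, ← pullback.condition]; rw [← Category.assoc]; exact s.condition
      have e1 : pullback.lift (s.fst ≫ pullback.fst p p) s.snd h1 =
          pullback.lift (s.fst ≫ pullback.snd p p) s.snd h2 := by
        rw [← cancel_mono (pullback.snd p U.ι)]
        rw [pullback.lift_snd, pullback.lift_snd]
      have := congrArg (· ≫ pullback.fst p U.ι) e1
      beta_reduce at this
      rwa [pullback.lift_fst, pullback.lift_fst] at this
    show pullback.lift _ _ _ ≫ (pullback.fst p U.ι ≫ pullback.diagonal p) = s.fst
    apply pullback.hom_ext <;> simp [key] <;> rw [pullback.lift_fst]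
  · -- uniqueness
    have hm1 : m ≫ (pullback.fst p U.ι ≫ pullback.diagonal p) = s.fst := hm .left
    have hm2 : m ≫ pullback.snd p U.ι = s.snd := hm .right
    refine pullback.hom_ext (f := p) (g := U.ι) ?_ ?_
    · have := congrArg (· ≫ pullback.fst p p) hm1
      rw [pullback.lift_fst, ← hm1, Category.assoc, Category.assoc, pullback.diagonal_fst, Category.comp_id]
    · rw [pullback.lift_snd]
      exact hm2
/-- Given `e : A ⟶ X` and `p : Y ⟶ X`, with `B := A ×_X Y = pullback e p`, the
natural morphism `B ×_A B ⟶ Y ×_X Y` induced by `B ⟶ Y` on both factors and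
`e : A ⟶ X` on the base. -/
noncomputable def sqMap {X Y A : Scheme} (e : A ⟶ X) (p : Y ⟶ X) :
    pullback (pullback.fst e p) (pullback.fst e p) ⟶ pullback p p :=
  pullback.map (pullback.fst e p) (pullback.fst e p) p p
    (pullback.snd e p) (pullback.snd e p) e pullback.condition pullback.condition

theorem stmt_9 (X Y A : Scheme) (p : Y ⟶ X) (e : A ⟶ X)
    [IsProper p] [IsClosedImmersion e]
    -- `p⁻¹(X ∖ e(A)) ⟶ X ∖ e(A)` is an isomorphism, where `X ∖ e(A)` is the open
    -- complement of `e(A)`: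
    (hiso : ∀ U : X.Opens, (U : Set X) = (Set.range e.base)ᶜ →
      IsIso (pullback.snd p U.ι)) :
    IsClosedImmersion (pullback.diagonal p) ∧
    IsClosedImmersion (sqMap e p) ∧
    Set.range (pullback.diagonal p).base ∪ Set.range (sqMap e p).base = Set.univ := by
  have hsq : IsClosedImmersion (sqMap e p) := by
    have h1 : IsClosedImmersion (pullback.snd e p) :=
      inferInstance
    have h2 : IsClosedImmersion
        (pullback.fst (pullback.snd p p) (pullback.snd e p)) :=
      inferInstance
    have h3 : IsClosedImmersion
        (pullback.fst (pullback.fst p p) (pullback.snd e p)) :=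
      inferInstance
    have h4 : IsClosedImmersion
        (pullback.snd (pullback.fst (pullback.fst p p) (pullback.snd e p))
          (pullback.fst (pullback.snd p p) (pullback.snd e p))) :=
      inferInstance
    unfold sqMap
    rw [pullback_map_eq_pullbackFstFstIso_inv]
    infer_instance
  refine ⟨inferInstance, hsq, ?_⟩
  -- the open complement of e(A)
  set U : X.Opens :=
    ⟨(Set.range e.base)ᶜ, (IsClosedImmersion.base_closed (f := e)).isClosed_range.isOpen_compl⟩
    with hUdef
  have hU : (U : Set X) = (Set.range e.base)ᶜ := rfl
  have : IsIso (pullback.snd p U.ι) := hiso U hU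
  apply Set.eq_univ_of_forall
  intro z
  by_cases hz : p.base ((pullback.fst p p).base z) ∈ Set.range e.base
  · right
    rw [show sqMap e p = pullback.map (pullback.fst e p) (pullback.fst e p) p p
        (pullback.snd e p) (pullback.snd e p) e pullback.condition pullback.condition from rfl,
      Scheme.Pullback.range_map]
    rw [Scheme.Pullback.range_snd]
    constructor
    · exact hz
    · show (pullback.snd p p).base z ∈ p.base ⁻¹' Set.range e.base
      have hcond : p.base ((pullback.snd p p).base z) = p.base ((pullback.fst p p).base z) := by
        rw [← Scheme.Hom.comp_apply, ← Scheme.Hom.comp_apply, pullback.condition]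
      simpa [hcond] using hz
  · left
    have key := aux_isPullback p U
    have hrange : Set.range (pullback.fst p U.ι ≫ pullback.diagonal p).base =
        (pullback.fst p p ≫ p).base ⁻¹' Set.range U.ι.base := by
      rw [← key.isoPullback_hom_fst, ← Scheme.Pullback.range_fst (pullback.fst p p ≫ p) U.ι]
      rw [Scheme.Hom.comp_base, TopCat.coe_comp, Set.range_comp]
      have hs : Function.Surjective key.isoPullback.hom.base :=
        (TopCat.homeoOfIso (Scheme.forgetToTop.mapIso key.isoPullback)).surjective
      rw [Set.range_eq_univ.mpr hs, Set.image_univ]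
    have hzmem : z ∈ (pullback.fst p p ≫ p).base ⁻¹' Set.range U.ι.base := by
      rw [Scheme.Opens.range_ι]
      show (pullback.fst p p ≫ p).base z ∈ (U : Set X)
      rw [hU]
      simpa using hz
    rw [← hrange] at hzmem
    obtain ⟨v, hv⟩ := hzmem
    exact ⟨(pullback.fst p U.ι).base v, by rw [← hv, Scheme.Hom.comp_apply]⟩
end

section
/- Let X be a scheme and let i_1 : Z_1 → X and i_2 : Z_2 → X be closed immersions such that the underlying set of X is the union of the images of Z_1 and Z_2. Let U be a reduced irreducible scheme and f : U → X a morphism. Then f factors through i_1 or f factors through i_2, i.e. there exists a morphism g : U → Z_1 with i_1 ∘ g = f or a morphism g : U → Z_2 with i_2 ∘ g = f. -/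
open AlgebraicGeometry CategoryTheory

lemma aux_lift {X Z U : Scheme} (i : Z ⟶ X) [IsClosedImmersion i] [IsReduced U]
    (f : U ⟶ X) (h : Set.range f.base ⊆ Set.range i.base) : ∃ g : U ⟶ Z, g ≫ i = f := by
  let p := Limits.pullback.fst f i
  haveI : IsClosedImmersion p :=
    inferInstance
  haveI : Surjective p := by
    constructor
    rw [← Set.range_eq_univ, Scheme.Pullback.range_fst]
    exact Set.eq_univ_of_forall fun x => h ⟨x, rfl⟩
  haveI := isIso_of_isClosedImmersion_of_surjective p
  refine ⟨inv p ≫ Limits.pullback.snd f i, ?_⟩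
  rw [Category.assoc, ← Limits.pullback.condition, ← Category.assoc, IsIso.inv_hom_id,
    Category.id_comp]

theorem stmt_10 (X Z₁ Z₂ U : Scheme)
    (i₁ : Z₁ ⟶ X) (i₂ : Z₂ ⟶ X) [IsClosedImmersion i₁] [IsClosedImmersion i₂]
    (hcover : Set.range i₁.base ∪ Set.range i₂.base = Set.univ)
    [IsReduced U] [IrreducibleSpace U] (f : U ⟶ X) :
    (∃ g : U ⟶ Z₁, g ≫ i₁ = f) ∨ (∃ g : U ⟶ Z₂, g ≫ i₂ = f) := by
  have h1 : IsClosed (f.base ⁻¹' Set.range i₁.base) :=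
    i₁.isClosedEmbedding.isClosed_range.preimage f.base.hom.continuous
  have h2 : IsClosed (f.base ⁻¹' Set.range i₂.base) :=
    i₂.isClosedEmbedding.isClosed_range.preimage f.base.hom.continuous
  have hu : (Set.univ : Set U) ⊆ f.base ⁻¹' Set.range i₁.base ∪ f.base ⁻¹' Set.range i₂.base := by
    rw [← Set.preimage_union, hcover]; simp
  have := (isPreirreducible_iff_isClosed_union_isClosed.mp
    (IrreducibleSpace.isIrreducible_univ U).2) _ _ h1 h2 hu
  rcases this with h | h
  · exact Or.inl (aux_lift i₁ f (fun x ⟨u, hu'⟩ => hu' ▸ h (Set.mem_univ u)))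
  · exact Or.inr (aux_lift i₂ f (fun x ⟨u, hu'⟩ => hu' ▸ h (Set.mem_univ u)))
end
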